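/- arXiv:2501.13730 — 10 statements merged into one kernel-verified Lean document; each statement's English description precedes it below -/
import Mathlib

section
/- Let d ∈ ℕ and n₁,…,n_d ∈ ℕ, and let X := [n₁] × ⋯ × [n_d]. Every permutation σ : X → X can be expressed as a composition σ = σ₁ ∘ ⋯ ∘ σ_{2d−1} of 2d−1 one-dimensional permutations. -/
/-- A permutation of a box `[n 0] × ⋯ × [n (d-1)]` is one-dimensional if there is a
coordinate `i` such that it changes only the `i`-th coordinate of each point. -/
def IsOneDimensional {d : ℕ} {n : Fin d → ℕ} (σ : Equiv.Perm (∀ i, Fin (n i))) : Prop :=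
  ∃ i, ∀ x, ∀ j, j ≠ i → σ x j = x j

open Finset in
lemma edge_coloring {γ B : Type} [DecidableEq γ] [Fintype B] [DecidableEq B] :
    ∀ (k : ℕ) (E : Finset γ) (s t : γ → B),
    (∀ b, (E.filter (fun e => s e = b)).card = k) →
    (∀ b, (E.filter (fun e => t e = b)).card = k) →
    ∃ c : γ → ℕ, (∀ e ∈ E, c e < k) ∧
      (∀ e ∈ E, ∀ e' ∈ E, c e = c e' → s e = s e' → e = e') ∧
      (∀ e ∈ E, ∀ e' ∈ E, c e = c e' → t e = t e' → e = e') := by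
  intro k
  induction k with
  | zero =>
    intro E s t hs _ht
    have hE : E = ∅ := by
      by_contra h
      obtain ⟨e, he⟩ := Finset.nonempty_iff_ne_empty.mpr h
      have := hs (s e)
      rw [Finset.card_eq_zero] at this
      exact absurd (this ▸ (Finset.mem_filter.mpr ⟨he, rfl⟩ : e ∈ E.filter (fun e' => s e' = s e))) (Finset.notMem_empty e)
    subst hE
    exact ⟨fun _ => 0, by simp, by simp, by simp⟩
  | succ k ih =>
    intro E s t hs ht
    classical
    set T : B → Finset B := fun b => (E.filter (fun e => s e = b)).image t with hT
    have hall : ∀ S : Finset B, S.card ≤ (S.biUnion T).card := by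
      intro S
      set U := S.biUnion T with hU
      have h1 : (E.filter (fun e => s e ∈ S)) ⊆ (E.filter (fun e => t e ∈ U)) := by
        intro e he
        rw [Finset.mem_filter] at he ⊢
        refine ⟨he.1, Finset.mem_biUnion.mpr ⟨s e, he.2, ?_⟩⟩
        exact Finset.mem_image.mpr ⟨e, Finset.mem_filter.mpr ⟨he.1, rfl⟩, rfl⟩
      have key : ∀ (V : Finset B), (E.filter (fun e => s e ∈ V)).card = (k+1) * V.card ∧
          (E.filter (fun e => t e ∈ V)).card = (k+1) * V.card := by
        intro V
        constructor
        · have : E.filter (fun e => s e ∈ V) = V.biUnion (fun b => E.filter (fun e => s e = b)) := by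
            ext e
            simp only [Finset.mem_filter, Finset.mem_biUnion]
            constructor
            · rintro ⟨he, hv⟩
              exact ⟨s e, hv, he, rfl⟩
            · rintro ⟨b, hb, he, hse⟩
              exact ⟨he, by rw [hse]; exact hb⟩
          rw [this, Finset.card_biUnion, Finset.sum_congr rfl (fun b _ => hs b),
            Finset.sum_const, smul_eq_mul, mul_comm]
          intro b _ b' _ hbb'
          refine Finset.disjoint_left.mpr ?_
          intro e he he'
          rw [Finset.mem_filter] at he he'
          exact hbb' (he.2 ▸ he'.2)
        · have : E.filter (fun e => t e ∈ V) = V.biUnion (fun b => E.filter (fun e => t e = b)) := by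
            ext e
            simp only [Finset.mem_filter, Finset.mem_biUnion]
            constructor
            · rintro ⟨he, hv⟩
              exact ⟨t e, hv, he, rfl⟩
            · rintro ⟨b, hb, he, hte⟩
              exact ⟨he, by rw [hte]; exact hb⟩
          rw [this, Finset.card_biUnion, Finset.sum_congr rfl (fun b _ => ht b),
            Finset.sum_const, smul_eq_mul, mul_comm]
          intro b _ b' _ hbb'
          refine Finset.disjoint_left.mpr ?_
          intro e he he'
          rw [Finset.mem_filter] at he he'
          exact hbb' (he.2 ▸ he'.2)
      have := Finset.card_le_card h1
      rw [(key S).1, (key U).2] at this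
      exact Nat.le_of_mul_le_mul_left this (Nat.succ_pos k)
    obtain ⟨f, finj, hf⟩ := (Finset.all_card_le_biUnion_card_iff_exists_injective T).mp hall
    have hMex : ∀ b, ∃ e, e ∈ E ∧ s e = b ∧ t e = f b := by
      intro b
      have := hf b
      rw [hT] at this
      obtain ⟨e, he, hte⟩ := Finset.mem_image.mp this
      rw [Finset.mem_filter] at he
      exact ⟨e, he.1, he.2, hte⟩
    choose M hM1 hM2 hM3 using hMex
    have fsurj : Function.Surjective f := Finite.surjective_of_injective finj
    set E' := E \ Finset.image M Finset.univ with hE'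
    have hs' : ∀ b, (E'.filter (fun e => s e = b)).card = k := by
      intro b
      have heq : E'.filter (fun e => s e = b) = (E.filter (fun e => s e = b)).erase (M b) := by
        ext e
        simp only [hE', Finset.mem_filter, Finset.mem_sdiff, Finset.mem_erase,
          Finset.mem_image, Finset.mem_univ, true_and]
        constructor
        · rintro ⟨⟨he, hni⟩, hse⟩
          exact ⟨fun h => hni ⟨b, h.symm⟩, he, hse⟩
        · rintro ⟨hne, he, hse⟩
          refine ⟨⟨he, ?_⟩, hse⟩
          rintro ⟨b', rfl⟩
          exact hne (by rw [hM2 b'] at hse; rw [hse])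
      rw [heq, Finset.card_erase_of_mem (Finset.mem_filter.mpr ⟨hM1 b, hM2 b⟩), hs b]
      omega

    have ht' : ∀ b, (E'.filter (fun e => t e = b)).card = k := by
      intro b
      obtain ⟨b₀, rfl⟩ := fsurj b
      have heq : E'.filter (fun e => t e = f b₀) = (E.filter (fun e => t e = f b₀)).erase (M b₀) := by
        ext e
        simp only [hE', Finset.mem_filter, Finset.mem_sdiff, Finset.mem_erase,
          Finset.mem_image, Finset.mem_univ, true_and]
        constructor
        · rintro ⟨⟨he, hni⟩, hte⟩
          exact ⟨fun h => hni ⟨b₀, h.symm⟩, he, hte⟩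
        · rintro ⟨hne, he, hte⟩
          refine ⟨⟨he, ?_⟩, hte⟩
          rintro ⟨b', rfl⟩
          rw [hM3 b'] at hte
          exact hne (by rw [finj hte])
      rw [heq, Finset.card_erase_of_mem (Finset.mem_filter.mpr ⟨hM1 b₀, hM3 b₀⟩), ht (f b₀)]
      omega
    obtain ⟨c', hb', hcs', hct'⟩ := ih E' s t hs' ht'
    refine ⟨fun e => if e ∈ Finset.image M Finset.univ then k else c' e, ?_, ?_, ?_⟩
    · intro e he
      by_cases h : e ∈ Finset.image M Finset.univ <;> simp only [h, if_true, if_false]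
      · omega
      · exact Nat.lt_succ_of_lt (hb' e (Finset.mem_sdiff.mpr ⟨he, h⟩))
    · intro e he e' he' hc hse
      by_cases h : e ∈ Finset.image M Finset.univ <;>
        by_cases h' : e' ∈ Finset.image M Finset.univ <;>
          simp only [h, h', if_true, if_false] at hc
      · obtain ⟨b₁, -, rfl⟩ := Finset.mem_image.mp h
        obtain ⟨b₂, -, rfl⟩ := Finset.mem_image.mp h'
        rw [hM2 b₁, hM2 b₂] at hse
        rw [hse]
      · exact absurd hc.symm (Nat.ne_of_lt (hb' e' (Finset.mem_sdiff.mpr ⟨he', h'⟩)))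
      · exact absurd hc (Nat.ne_of_lt (hb' e (Finset.mem_sdiff.mpr ⟨he, h⟩)))
      · exact hcs' e (Finset.mem_sdiff.mpr ⟨he, h⟩) e' (Finset.mem_sdiff.mpr ⟨he', h'⟩) hc hse
    · intro e he e' he' hc hte
      by_cases h : e ∈ Finset.image M Finset.univ <;>
        by_cases h' : e' ∈ Finset.image M Finset.univ <;>
          simp only [h, h', if_true, if_false] at hc
      · obtain ⟨b₁, -, rfl⟩ := Finset.mem_image.mp h
        obtain ⟨b₂, -, rfl⟩ := Finset.mem_image.mp h'
        rw [hM3 b₁, hM3 b₂] at hte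
        rw [finj hte]
      · exact absurd hc.symm (Nat.ne_of_lt (hb' e' (Finset.mem_sdiff.mpr ⟨he', h'⟩)))
      · exact absurd hc (Nat.ne_of_lt (hb' e (Finset.mem_sdiff.mpr ⟨he, h⟩)))
      · exact hct' e (Finset.mem_sdiff.mpr ⟨he, h⟩) e' (Finset.mem_sdiff.mpr ⟨he', h'⟩) hc hte

lemma three_factor {A B : Type} [Fintype A] [DecidableEq A] [Fintype B] [DecidableEq B]
    (σ : Equiv.Perm (A × B)) :
    ∃ f g h : Equiv.Perm (A × B),
      (∀ y, (f y).2 = y.2) ∧ (∀ y, (g y).1 = y.1) ∧ (∀ y, (h y).2 = y.2) ∧ σ = f * g * h := by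
  classical
  have hs : ∀ b, ((Finset.univ : Finset (A × B)).filter (fun x => Prod.snd x = b)).card
      = Fintype.card A := by
    intro b
    have : (Finset.univ : Finset (A × B)).filter (fun x => Prod.snd x = b)
        = Finset.univ.map ⟨fun a => (a, b), fun a a' hh => (Prod.mk.injEq _ _ _ _ ▸ hh : _ ∧ _).1⟩ := by
      ext ⟨a, b'⟩
      simp [eq_comm, and_comm]
      exact ⟨fun hb => ⟨a, by subst hb; rfl⟩, fun ⟨_, hx⟩ => (congrArg Prod.snd hx).symm⟩
    rw [this, Finset.card_map, Finset.card_univ]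
  have ht : ∀ b, ((Finset.univ : Finset (A × B)).filter (fun x => (σ x).2 = b)).card
      = Fintype.card A := by
    intro b
    have : (Finset.univ : Finset (A × B)).filter (fun x => (σ x).2 = b)
        = (Finset.univ.filter (fun x : A × B => Prod.snd x = b)).map σ.symm.toEmbedding := by
      ext x
      simp only [Finset.mem_map, Finset.mem_filter, Finset.mem_univ, true_and,
        Equiv.coe_toEmbedding]
      constructor
      · intro hx; exact ⟨σ x, hx, σ.symm_apply_apply x⟩
      · rintro ⟨y, hy, rfl⟩; rwa [σ.apply_symm_apply]
    rw [this, Finset.card_map, hs b]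
  obtain ⟨c, hb, hcs, hct⟩ := edge_coloring (Fintype.card A) Finset.univ Prod.snd
    (fun x => (σ x).2) hs ht
  set col : A × B → A := fun x => (Fintype.equivFin A).symm ⟨c x, hb x (Finset.mem_univ x)⟩
    with hcol
  have colinj : ∀ x y, col x = col y → c x = c y := by
    intro x y hxy
    have := (Fintype.equivFin A).symm.injective hxy
    exact congrArg Fin.val this
  have hφ : Function.Bijective (fun x : A × B => (col x, x.2)) := by
    rw [← Finite.injective_iff_bijective]
    intro x y hxy
    have h1 := congrArg Prod.fst hxy
    have h2 := congrArg Prod.snd hxy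
    exact hcs x (Finset.mem_univ x) y (Finset.mem_univ y) (colinj _ _ h1) h2
  have hψ : Function.Bijective (fun x : A × B => (col x, (σ x).2)) := by
    rw [← Finite.injective_iff_bijective]
    intro x y hxy
    have h1 := congrArg Prod.fst hxy
    have h2 := congrArg Prod.snd hxy
    exact hct x (Finset.mem_univ x) y (Finset.mem_univ y) (colinj _ _ h1) h2
  set h : Equiv.Perm (A × B) := Equiv.ofBijective _ hφ with hh
  set p : Equiv.Perm (A × B) := Equiv.ofBijective _ hψ with hp
  refine ⟨σ * p⁻¹, p * h⁻¹, h, ?_, ?_, ?_, ?_⟩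
  · intro y
    have hx : p (p⁻¹ y) = y := Equiv.apply_symm_apply p y
    calc ((σ * p⁻¹) y).2 = (σ (p⁻¹ y)).2 := rfl
    _ = (p (p⁻¹ y)).2 := rfl
    _ = y.2 := by rw [hx]
  · intro y
    have hx : h (h⁻¹ y) = y := Equiv.apply_symm_apply h y
    calc ((p * h⁻¹) y).1 = (p (h⁻¹ y)).1 := rfl
    _ = (h (h⁻¹ y)).1 := rfl
    _ = y.1 := by rw [hx]
  · intro y; rfl
  · group

lemma slice_perm {C B : Type*} (g : Equiv.Perm (C × B)) (hg : ∀ y, (g y).1 = y.1) :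
    ∃ u : C → Equiv.Perm B, g = Equiv.prodCongrRight u := by
  have hg' : ∀ y, (g⁻¹ y).1 = y.1 := by
    intro y
    have := hg (g⁻¹ y)
    rw [show ∀ z, g (g⁻¹ z) = z from Equiv.apply_symm_apply g] at this
    exact this.symm
  refine ⟨fun c => ⟨fun b => (g (c, b)).2, fun b => (g⁻¹ (c, b)).2, ?_, ?_⟩, ?_⟩
  · intro b
    have h1 : (c, (g (c, b)).2) = g (c, b) := by
      have := hg (c, b)
      exact Prod.ext this.symm rfl
    show (g⁻¹ (c, (g (c, b)).2)).2 = b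
    rw [h1, show ∀ z, g⁻¹ (g z) = z from Equiv.symm_apply_apply g]
  · intro b
    have h1 : (c, (g⁻¹ (c, b)).2) = g⁻¹ (c, b) := by
      have := hg' (c, b)
      exact Prod.ext this.symm rfl
    show (g (c, (g⁻¹ (c, b)).2)).2 = b
    rw [h1, show ∀ z, g (g⁻¹ z) = z from Equiv.apply_symm_apply g]
  · ext y
    · exact hg y
    · rfl

def boxEquiv {d : ℕ} (n : Fin (d + 1) → ℕ) :
    (∀ i, Fin (n i)) ≃ Fin (n 0) × (∀ i : Fin d, Fin (n i.succ)) where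
  toFun x := (x 0, fun j => x j.succ)
  invFun p := Fin.cons p.1 p.2
  left_inv x := by
    ext j
    refine Fin.cases ?_ ?_ j <;> simp
  right_inv p := by
    ext <;> simp

def pullHom {α β : Type*} (e : α ≃ β) : Equiv.Perm β →* Equiv.Perm α where
  toFun τ := (e.trans τ).trans e.symm
  map_one' := by ext x; simp
  map_mul' τ τ' := by ext x; simp

@[simp] lemma pullHom_apply {α β : Type*} (e : α ≃ β) (τ : Equiv.Perm β) (x : α) :
    pullHom e τ x = e.symm (τ (e x)) := rfl

lemma pullHom_push {α β : Type*} (e : α ≃ β) (τ : Equiv.Perm α) :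
    pullHom e ((e.symm.trans τ).trans e) = τ := by
  ext x; simp [pullHom]

def pcrHom (C B : Type*) : (C → Equiv.Perm B) →* Equiv.Perm (C × B) where
  toFun u := Equiv.prodCongrRight u
  map_one' := by ext ⟨c, b⟩ <;> simp
  map_mul' u v := by ext ⟨c, b⟩ <;> simp

@[simp] lemma pcrHom_apply (C B : Type*) (u : C → Equiv.Perm B) (y : C × B) :
    pcrHom C B u y = (y.1, u y.1 y.2) := rfl

lemma pi_list_prod {C M : Type*} [Monoid M] (l : List (C → M)) (c : C) :
    l.prod c = (l.map (fun u => u c)).prod := by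
  induction l with
  | nil => rfl
  | cons hd tl ih => simp [ih]

lemma aux_decomp : ∀ (d : ℕ) (n : Fin (d + 1) → ℕ) (A : Type)
    (σ : A → Equiv.Perm (∀ i, Fin (n i))),
    ∃ L : List ((A → Equiv.Perm (∀ i, Fin (n i))) × Fin (d + 1)),
      L.length = 2 * d + 1 ∧
      (∀ pr ∈ L, ∀ a x j, j ≠ pr.2 → pr.1 a x j = x j) ∧
      (∀ a, σ a = (L.map (fun pr => pr.1 a)).prod) := by
  intro d
  induction d with
  | zero =>
    intro n A σ
    refine ⟨[(σ, 0)], rfl, ?_, ?_⟩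
    · rintro pr hpr a x j hj
      simp only [List.mem_singleton] at hpr
      subst hpr
      exact absurd (Fin.eq_zero j) hj
    · intro a; simp
  | succ d ih =>
    intro n A σ
    classical
    set C := Fin (n 0) with hC
    set B := (∀ i : Fin (d + 1), Fin (n i.succ)) with hB
    set e := boxEquiv n with he
    have tf := fun a => three_factor ((e.symm.trans (σ a)).trans e)
    choose f g h hf hg hh hfact using tf
    have gu := fun a => slice_perm (g a) (hg a)
    choose u hu using gu
    obtain ⟨L', hlen', hone', hprod'⟩ := ih (fun i => n i.succ) (A × C)
      (fun ac => u ac.1 ac.2)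
    set lift : ((A × C → Equiv.Perm B) × Fin (d + 1)) →
        ((A → Equiv.Perm (∀ i, Fin (n i))) × Fin (d + 2)) :=
      fun pr => (fun a => pullHom e (Equiv.prodCongrRight (fun c => pr.1 (a, c))), pr.2.succ)
      with hlift
    refine ⟨(fun a => pullHom e (f a), 0) :: L'.map lift ++ [(fun a => pullHom e (h a), 0)],
      ?_, ?_, ?_⟩
    · simp [hlen']; omega
    · intro pr hpr a x j hj
      simp only [List.mem_cons, List.mem_append, List.mem_map, List.mem_singleton,
        List.not_mem_nil, or_false] at hpr
      rcases hpr with (rfl | ⟨q, hq, rfl⟩) | rfl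
      · -- head : f, coordinate 0
        obtain ⟨j', rfl⟩ := Fin.eq_succ_of_ne_zero hj
        show (e.symm (f a (e x))) j'.succ = x j'.succ
        have h2 := hf a (e x)
        calc (e.symm (f a (e x))) j'.succ
            = (Fin.cons (f a (e x)).1 (f a (e x)).2 : ∀ i, Fin (n i)) j'.succ := rfl
          _ = (f a (e x)).2 j' := by rw [Fin.cons_succ]
          _ = (e x).2 j' := by rw [h2]
          _ = x j'.succ := rfl
      · -- middle
        rcases Fin.eq_zero_or_eq_succ j with rfl | ⟨j', rfl⟩
        · show (e.symm ((Equiv.prodCongrRight fun c => q.1 (a, c)) (e x))) 0 = x 0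
          calc (e.symm ((Equiv.prodCongrRight fun c => q.1 (a, c)) (e x))) 0
              = (e x).1 := rfl
            _ = x 0 := rfl
        · have hj' : j' ≠ q.2 := fun hc => hj (by rw [hc])
          show (e.symm ((Equiv.prodCongrRight fun c => q.1 (a, c)) (e x))) j'.succ = x j'.succ
          calc (e.symm ((Equiv.prodCongrRight fun c => q.1 (a, c)) (e x))) j'.succ
              = (Fin.cons ((e x).1) (q.1 (a, (e x).1) (e x).2) : ∀ i, Fin (n i)) j'.succ := rfl
            _ = q.1 (a, (e x).1) (e x).2 j' := by rw [Fin.cons_succ]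
            _ = (e x).2 j' := hone' q hq (a, (e x).1) (e x).2 j' hj'
            _ = x j'.succ := rfl
      · -- tail : h, coordinate 0
        obtain ⟨j', rfl⟩ := Fin.eq_succ_of_ne_zero hj
        show (e.symm (h a (e x))) j'.succ = x j'.succ
        have h2 := hh a (e x)
        calc (e.symm (h a (e x))) j'.succ
            = (Fin.cons (h a (e x)).1 (h a (e x)).2 : ∀ i, Fin (n i)) j'.succ := rfl
          _ = (h a (e x)).2 j' := by rw [Fin.cons_succ]
          _ = (e x).2 j' := by rw [h2]
          _ = x j'.succ := rfl
    · intro a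
      have key : pullHom e (g a) = ((L'.map lift).map (fun pr => pr.1 a)).prod := by
        have hu2 : u a = (L'.map (fun pr c => pr.1 (a, c))).prod := by
          funext c
          rw [pi_list_prod]
          have := hprod' (a, c)
          simp only at this
          rw [this, List.map_map]
          rfl
        set Ψ : (C → Equiv.Perm B) →* Equiv.Perm (∀ i, Fin (n i)) :=
          (pullHom e).comp (pcrHom C B) with hΨ
        have h1 : pullHom e (g a) = Ψ (u a) := by
          rw [hu a]; rfl
        rw [h1, hu2, MonoidHom.map_list_prod, List.map_map, List.map_map]
        congr 1
      simp only [List.map_cons, List.map_append, List.map_nil, List.prod_cons,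
        List.prod_append, List.prod_nil, mul_one]
      rw [← key]
      have : σ a = pullHom e ((e.symm.trans (σ a)).trans e) := (pullHom_push e (σ a)).symm
      rw [this, hfact a, map_mul, map_mul, mul_assoc]

/-- Every permutation of a box can be written as a composition of 2d-1
one-dimensional permutations. -/
theorem box_permutation_decomposition (d : ℕ) (n : Fin d → ℕ)
    (σ : Equiv.Perm (∀ i, Fin (n i))) :
    ∃ l : List (Equiv.Perm (∀ i, Fin (n i))),
      l.length = 2 * d - 1 ∧ (∀ τ ∈ l, IsOneDimensional τ) ∧ σ = l.prod := by
  cases d with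
  | zero =>
    refine ⟨[], rfl, by simp, ?_⟩
    haveI : Subsingleton (∀ i : Fin 0, Fin (n i)) := ⟨fun a b => funext fun i => i.elim0⟩
    exact Equiv.ext fun x => Subsingleton.elim _ _
  | succ d =>
    obtain ⟨L, hlen, hone, hprod⟩ := aux_decomp d n Unit (fun _ => σ)
    refine ⟨L.map (fun pr => pr.1 ()), ?_, ?_, ?_⟩
    · rw [List.length_map, hlen]; omega
    · intro τ hτ
      obtain ⟨pr, hpr, rfl⟩ := List.mem_map.mp hτ
      exact ⟨pr.2, hone pr hpr ()⟩
    · exact hprod ()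
end

section
/- Let d ∈ ℕ and n₁,…,n_d ≥ 2, and let X := [n₁] × ⋯ × [n_d]. There exists a permutation σ : X → X such that any expression of σ as a composition of one-dimensional permutations requires at least 2d−1 factors. -/
private lemma prod_pres {d : ℕ} {n : Fin d → ℕ} (j : Fin d)
    (L : List (Equiv.Perm (∀ i, Fin (n i))))
    (h : ∀ ρ ∈ L, ∀ x, ρ x j = x j) : ∀ x, L.prod x j = x j := by
  induction L with
  | nil => intro x; simp
  | cons ρ L ih =>
    intro x
    rw [List.prod_cons]
    have hx : (ρ * L.prod) x = ρ (L.prod x) := rfl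
    rw [hx, h ρ List.mem_cons_self, ih (fun τ hτ => h τ (List.mem_cons_of_mem _ hτ))]

private lemma core {d : ℕ} {n : Fin d → ℕ}
    (L1 L2 : List (Equiv.Perm (∀ i, Fin (n i)))) (τ : Equiv.Perm (∀ i, Fin (n i)))
    (a b : ∀ i, Fin (n i)) (j : Fin d)
    (hswap : Equiv.swap a b = (L1 ++ τ :: L2).prod)
    (h1 : ∀ ρ ∈ L1, ∀ x, ρ x j = x j) (h2 : ∀ ρ ∈ L2, ∀ x, ρ x j = x j)
    (hτ : ∀ x m, m ≠ j → τ x m = x m) (hab : a j ≠ b j) :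
    ∀ m, m ≠ j → L2.prod b m = L2.prod a m := by
  classical
  set P := L2.prod with hP
  set Q := L1.prod with hQ
  have happ : ∀ x, Equiv.swap a b x = Q (τ (P x)) := by
    intro x
    rw [hswap, List.prod_append, List.prod_cons]
    rfl
  have hPj : ∀ x, P x j = x j := prod_pres j L2 h2
  have hQj : ∀ x, Q x j = x j := prod_pres j L1 h1
  have hfix : ∀ x, x ≠ a → x ≠ b → τ (P x) = P x := by
    intro x hxa hxb
    have hx : Q (τ (P x)) = x := by
      rw [← happ, Equiv.swap_apply_of_ne_of_ne hxa hxb]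
    funext m
    by_cases hm : m = j
    · subst hm
      calc τ (P x) m = Q (τ (P x)) m := (hQj _).symm
        _ = x m := by rw [hx]
        _ = P x m := (hPj x).symm
    · exact hτ _ m hm
  have hbval : Q (τ (P a)) = b := by
    rw [← happ, Equiv.swap_apply_left]
  have hne : τ (P a) ≠ P a := by
    intro hcon
    have h1' : τ (P a) j = b j := by
      calc τ (P a) j = Q (τ (P a)) j := (hQj _).symm
        _ = b j := by rw [hbval]
    rw [hcon, hPj] at h1'
    exact hab h1'
  have key : τ (P a) = P b := by
    by_contra hcon
    have hPx : P (P.symm (τ (P a))) = τ (P a) := P.apply_symm_apply _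
    have hxa : P.symm (τ (P a)) ≠ a := by
      intro h
      rw [h] at hPx
      exact hne hPx.symm
    have hxb : P.symm (τ (P a)) ≠ b := by
      intro h
      rw [h] at hPx
      exact hcon hPx.symm
    have hfy : τ (τ (P a)) = τ (P a) := by
      conv_lhs => rw [← hPx]
      rw [hfix _ hxa hxb]
      exact hPx
    exact hne (τ.injective hfy)
  intro m hm
  calc P b m = τ (P a) m := by rw [key]
    _ = P a m := hτ _ m hm

private lemma aux {d : ℕ} {n : Fin d → ℕ}
    (l : List (Equiv.Perm (∀ i, Fin (n i)))) (a b : ∀ i, Fin (n i)) (j j' : Fin d)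
    (t : ℕ) (ht : t < l.length)
    (hswap : Equiv.swap a b = l.prod)
    (hpresj : ∀ s (hs : s < l.length), s ≠ t → ∀ x, (l[s]'hs) x j = x j)
    (hτ : ∀ x m, m ≠ j → (l[t]'ht) x m = x m)
    (hpresj' : ∀ s (hs : s < l.length), t < s → ∀ x, (l[s]'hs) x j' = x j')
    (hab : a j ≠ b j) (hjj' : j' ≠ j) :
    a j' = b j' := by
  have hdecomp : l = l.take t ++ (l[t]'ht) :: l.drop (t + 1) := by
    conv_lhs => rw [← List.take_append_drop t l, List.drop_eq_getElem_cons ht]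
  have h1 : ∀ ρ ∈ l.take t, ∀ x, ρ x j = x j := by
    intro ρ hρ
    obtain ⟨s, hs, rfl⟩ := List.mem_iff_getElem.mp hρ
    have hst : s < t := by
      have := hs
      rw [List.length_take] at this
      omega
    have hsl : s < l.length := by
      have := hs
      rw [List.length_take] at this
      omega
    intro x
    rw [List.getElem_take]
    exact hpresj s hsl (by omega) x
  have h2 : ∀ ρ ∈ l.drop (t + 1), ∀ x, ρ x j = x j := by
    intro ρ hρ
    obtain ⟨s, hs, rfl⟩ := List.mem_iff_getElem.mp hρ
    have hsl : t + 1 + s < l.length := by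
      have := hs
      rw [List.length_drop] at this
      omega
    intro x
    rw [List.getElem_drop]
    exact hpresj (t + 1 + s) hsl (by omega) x
  have h2' : ∀ ρ ∈ l.drop (t + 1), ∀ x, ρ x j' = x j' := by
    intro ρ hρ
    obtain ⟨s, hs, rfl⟩ := List.mem_iff_getElem.mp hρ
    have hsl : t + 1 + s < l.length := by
      have := hs
      rw [List.length_drop] at this
      omega
    intro x
    rw [List.getElem_drop]
    exact hpresj' (t + 1 + s) hsl (by omega) x
  have hM := core (l.take t) (l.drop (t + 1)) (l[t]'ht) a b j
    (by rw [← hdecomp]; exact hswap) h1 h2 hτ hab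
  have hPa : (l.drop (t + 1)).prod a j' = a j' := prod_pres j' _ h2' a
  have hPb : (l.drop (t + 1)).prod b j' = b j' := prod_pres j' _ h2' b
  calc a j' = (l.drop (t + 1)).prod a j' := hPa.symm
    _ = (l.drop (t + 1)).prod b j' := (hM j' hjj').symm
    _ = b j' := hPb

/-- If all sides of the box are at least 2, there is a permutation requiring at least
2d-1 one-dimensional factors in any decomposition. -/
theorem box_permutation_decomposition_lower_bound (d : ℕ) (n : Fin d → ℕ)
    (hn : ∀ i, 2 ≤ n i) :
    ∃ σ : Equiv.Perm (∀ i, Fin (n i)),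
      ∀ l : List (Equiv.Perm (∀ i, Fin (n i))),
        (∀ τ ∈ l, IsOneDimensional τ) → σ = l.prod → 2 * d - 1 ≤ l.length := by
  classical
  set a : ∀ i, Fin (n i) := fun i => ⟨0, by have := hn i; omega⟩ with ha
  set b : ∀ i, Fin (n i) := fun i => ⟨1, by have := hn i; omega⟩ with hb
  have habj : ∀ i : Fin d, a i ≠ b i := by
    intro i h
    have := congrArg Fin.val h
    simp [ha, hb] at this
  refine ⟨Equiv.swap a b, ?_⟩
  intro l hl hσ
  by_contra hcon
  push_neg at hcon
  have hd : 0 < d := by omega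
  have hklt : l.length ≤ 2 * d - 2 := by omega
  have hchoice : ∀ s : Fin l.length, ∃ i : Fin d, ∀ x m, m ≠ i → l.get s x m = x m := by
    intro s
    exact hl _ (l.get_mem s)
  choose idx hidx using hchoice
  set f : Fin d → ℕ := fun j => (Finset.univ.filter (fun s => idx s = j)).card with hf
  have hf1 : ∀ j, 1 ≤ f j := by
    intro j
    rw [Nat.one_le_iff_ne_zero]
    intro h0
    have hemp : ∀ s : Fin l.length, idx s ≠ j := by
      intro s hs
      have hmem : s ∈ Finset.univ.filter (fun s => idx s = j) := by
        simp [hs]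
      rw [Finset.card_eq_zero] at h0
      rw [h0] at hmem
      exact absurd hmem (Finset.notMem_empty s)
    have hpres : ∀ ρ ∈ l, ∀ x, ρ x j = x j := by
      intro ρ hρ
      obtain ⟨s, rfl⟩ := List.mem_iff_get.mp hρ
      intro x
      exact hidx s x j (fun h => hemp s h.symm)
    have hsw : Equiv.swap a b a j = a j := by
      rw [hσ]
      exact prod_pres j l hpres a
    rw [Equiv.swap_apply_left] at hsw
    exact habj j hsw.symm
  have hsum : ∑ j, f j = l.length := by
    have := Finset.card_eq_sum_card_fiberwise
      (f := idx) (s := Finset.univ) (t := Finset.univ) (fun x _ => Finset.mem_univ _)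
    simpa using this.symm
  have hpair : ∃ p q : Fin d, p ≠ q ∧ f p = 1 ∧ f q = 1 := by
    by_contra hno
    push_neg at hno
    by_cases hex : ∃ p, f p = 1
    · obtain ⟨p, hp⟩ := hex
      have hge : ∀ q ∈ Finset.univ.erase p, 2 ≤ f q := by
        intro q hq
        have hqp : q ≠ p := Finset.ne_of_mem_erase hq
        have hq1 : f q ≠ 1 := hno p q (fun h => hqp h.symm) hp
        have := hf1 q
        omega
      have hs1 : (Finset.univ.erase p).card • 2 ≤ ∑ q ∈ Finset.univ.erase p, f q :=
        Finset.card_nsmul_le_sum _ _ _ hge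
      have hcard : (Finset.univ.erase p).card = d - 1 := by
        rw [Finset.card_erase_of_mem (Finset.mem_univ p), Finset.card_univ, Fintype.card_fin]
      have hsplit : f p + ∑ q ∈ Finset.univ.erase p, f q = ∑ j, f j :=
        Finset.add_sum_erase _ _ (Finset.mem_univ p)
      rw [hcard, smul_eq_mul] at hs1
      omega
    · push_neg at hex
      have hge : ∀ q ∈ (Finset.univ : Finset (Fin d)), 2 ≤ f q := by
        intro q _
        have := hf1 q
        have := hex q
        omega
      have hs1 : (Finset.univ : Finset (Fin d)).card • 2 ≤ ∑ q, f q :=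
        Finset.card_nsmul_le_sum _ _ _ hge
      rw [Finset.card_univ, Fintype.card_fin, smul_eq_mul] at hs1
      omega
  obtain ⟨p, q, hpq, hp, hq⟩ := hpair
  have hupos : ∀ r, f r = 1 → ∃ s : Fin l.length, idx s = r ∧ ∀ s', idx s' = r → s' = s := by
    intro r hr
    obtain ⟨s, hs⟩ := Finset.card_eq_one.mp hr
    have hsmem : s ∈ Finset.univ.filter (fun s => idx s = r) := by
      rw [hs]; exact Finset.mem_singleton_self s
    refine ⟨s, by simpa using hsmem, ?_⟩
    intro s' h'
    have : s' ∈ Finset.univ.filter (fun s => idx s = r) := by simp [h']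
    rw [hs] at this
    exact Finset.mem_singleton.mp this
  obtain ⟨t, htp, htu⟩ := hupos p hp
  obtain ⟨t', ht'q, ht'u⟩ := hupos q hq
  have htt' : (t : ℕ) ≠ (t' : ℕ) := by
    intro h
    apply hpq
    rw [← htp, ← ht'q]
    congr 1
    exact Fin.ext h
  have hgetidx : ∀ (s : ℕ) (hs : s < l.length) (x : ∀ i, Fin (n i)) (m : Fin d),
      m ≠ idx ⟨s, hs⟩ → (l[s]'hs) x m = x m := by
    intro s hs x m hm
    have : l[s]'hs = l.get ⟨s, hs⟩ := rfl
    rw [this]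
    exact hidx ⟨s, hs⟩ x m hm
  rcases lt_or_gt_of_ne htt' with hlt | hlt
  · -- t < t' : split at t', coordinate q changes only at t'; positions > t' avoid p too
    have key : a p = b p := by
      refine aux l a b q p (t' : ℕ) t'.isLt hσ ?_ ?_ ?_ (habj q) hpq
      · intro s hs hst x
        apply hgetidx
        intro h
        exact hst (congrArg Fin.val (ht'u ⟨s, hs⟩ h.symm))
      · intro x m hm
        apply hgetidx
        have he : idx ⟨(t' : ℕ), t'.isLt⟩ = q := ht'q
        rw [he]
        exact hm
      · intro s hs hst x
        apply hgetidx
        intro h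
        have hsv : s = (t : ℕ) := congrArg Fin.val (htu ⟨s, hs⟩ h.symm)
        omega
    exact habj p key
  · -- t' < t : split at t, coordinate p changes only at t; positions > t avoid q too
    have key : a q = b q := by
      refine aux l a b p q (t : ℕ) t.isLt hσ ?_ ?_ ?_ (habj p) (fun h => hpq h.symm)
      · intro s hs hst x
        apply hgetidx
        intro h
        exact hst (congrArg Fin.val (htu ⟨s, hs⟩ h.symm))
      · intro x m hm
        apply hgetidx
        have he : idx ⟨(t : ℕ), t.isLt⟩ = p := htp
        rw [he]
        exact hm
      · intro s hs hst x
        apply hgetidx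
        intro h
        have hsv : s = (t' : ℕ) := congrArg Fin.val (ht'u ⟨s, hs⟩ h.symm)
        omega
    exact habj q key
end

section
/- Let X = [m] × [n]. Every permutation σ : X → X can be written as σ = σ₂ ∘ σ₁ ∘ σ₂′, where σ₂ and σ₂′ are permutations affecting only the second coordinate and σ₁ is a permutation affecting only the first coordinate. -/
open Finset

/-- Core combinatorial lemma (edge coloring of regular bipartite multigraphs, via
Hall's marriage theorem): if `g : Fin m × Fin n → Fin m` has all fibers of size `n`,
there exist column permutations `d i` such that for each `k`, the map
`i ↦ g (i, d i k)` is injective. -/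
lemma two_dim_core (m : ℕ) : ∀ (n : ℕ) (g : Fin m × Fin n → Fin m),
    (∀ i', (univ.filter fun x => g x = i').card = n) →
    ∃ d : Fin m → Equiv.Perm (Fin n), ∀ k, Function.Injective fun i => g (i, d i k) := by
  intro n
  induction n with
  | zero => exact fun g _ => ⟨fun _ => 1, fun k => k.elim0⟩
  | succ n ih =>
    intro g hg
    -- Hall's condition
    set t : Fin m → Finset (Fin m) := fun i => Finset.image (fun j => g (i, j)) univ with ht
    have hall : ∀ S : Finset (Fin m), S.card ≤ (S.biUnion t).card := by
      intro S
      have h1 : (S ×ˢ (univ : Finset (Fin (n+1)))).card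
          = ∑ b ∈ S.biUnion t, ((S ×ˢ univ).filter fun x => g x = b).card := by
        apply Finset.card_eq_sum_card_fiberwise
        intro x hx
        rw [Finset.mem_coe, Finset.mem_product] at hx
        exact Finset.mem_biUnion.mpr ⟨x.1, hx.1, Finset.mem_image.mpr ⟨x.2, mem_univ _, rfl⟩⟩
      have h2 : ∀ b, ((S ×ˢ univ).filter fun x => g x = b).card ≤ n + 1 := by
        intro b
        calc ((S ×ˢ univ).filter fun x => g x = b).card
            ≤ (univ.filter fun x => g x = b).card :=
              Finset.card_le_card (Finset.filter_subset_filter _ (Finset.subset_univ _))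
          _ = n + 1 := hg b
      have h3 : S.card * (n+1) ≤ (S.biUnion t).card * (n+1) := by
        have hc : (S ×ˢ (univ : Finset (Fin (n+1)))).card = S.card * (n+1) := by
          rw [Finset.card_product]; simp
        rw [← hc]
        calc (S ×ˢ (univ : Finset (Fin (n+1)))).card
            = ∑ b ∈ S.biUnion t, ((S ×ˢ univ).filter fun x => g x = b).card := h1
          _ ≤ ∑ _b ∈ S.biUnion t, (n+1) := Finset.sum_le_sum fun b _ => h2 b
          _ = (S.biUnion t).card * (n+1) := by rw [Finset.sum_const, smul_eq_mul]
      exact Nat.le_of_mul_le_mul_right h3 (Nat.succ_pos n)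
    obtain ⟨h, hinj, hmem⟩ :=
      (Finset.all_card_le_biUnion_card_iff_exists_injective t).mp hall
    choose j hj using fun i => Finset.mem_image.mp (hmem i)
    obtain ⟨j, hj⟩ : ∃ j : Fin m → Fin (n+1), ∀ i, g (i, j i) = h i :=
      ⟨fun i => j i, fun i => (hj i).2⟩
    have hbij : Function.Bijective h := Finite.injective_iff_bijective.mp hinj
    set hE : Fin m ≃ Fin m := Equiv.ofBijective h hbij with hhE
    -- restricted function
    set g' : Fin m × Fin n → Fin m := fun x => g (x.1, (j x.1).succAbove x.2) with hg'
    have hφinj : Function.Injective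
        (fun x : Fin m × Fin n => ((x.1, (j x.1).succAbove x.2) : Fin m × Fin (n+1))) := by
      intro a b hab
      dsimp only at hab
      have h1 : a.1 = b.1 := (Prod.ext_iff.mp hab).1
      have h2 : (j a.1).succAbove a.2 = (j b.1).succAbove b.2 := (Prod.ext_iff.mp hab).2
      rw [h1] at h2
      exact Prod.ext h1 ((j b.1).succAbove_right_injective h2)
    have hg'card : ∀ i', (univ.filter fun x => g' x = i').card = n := by
      intro i'
      set a : Fin m := hE.symm i' with ha
      have hImg : (univ.filter fun x => g' x = i').image
          (fun x : Fin m × Fin n => ((x.1, (j x.1).succAbove x.2) : Fin m × Fin (n+1)))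
          = (univ.filter fun x => g x = i').erase (a, j a) := by
        ext y
        simp only [Finset.mem_image, Finset.mem_filter, Finset.mem_erase, mem_univ, true_and]
        constructor
        · rintro ⟨x, hx, rfl⟩
          refine ⟨?_, hx⟩
          intro hy
          have h1 : x.1 = a := congrArg Prod.fst hy
          have h2 : (j x.1).succAbove x.2 = j a := congrArg Prod.snd hy
          rw [h1] at h2
          exact (j a).succAbove_ne x.2 h2
        · rintro ⟨hne, hy⟩
          have hy2 : y.2 ≠ j y.1 := by
            intro hcontra
            apply hne
            have hgy : g (y.1, j y.1) = i' := by rw [← hcontra]; exact hy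
            rw [hj y.1] at hgy
            have hy1 : y.1 = a := hE.eq_symm_apply.mpr hgy
            exact Prod.ext hy1 (by rw [hcontra, hy1])
          obtain ⟨j', hj'⟩ := Fin.exists_succAbove_eq hy2
          refine ⟨(y.1, j'), ?_, ?_⟩
          · show g (y.1, (j y.1).succAbove j') = i'
            rw [hj']; exact hy
          · show ((y.1, (j y.1).succAbove j') : Fin m × Fin (n+1)) = y
            rw [hj']
      have hmemfiber : (a, j a) ∈ univ.filter fun x => g x = i' := by
        simp only [Finset.mem_filter, mem_univ, true_and]
        rw [hj a]
        exact hE.apply_symm_apply i'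
      have := Finset.card_image_of_injective (univ.filter fun x => g' x = i') hφinj
      rw [hImg, Finset.card_erase_of_mem hmemfiber, hg i'] at this
      omega
    obtain ⟨d', hd'⟩ := ih g' hg'card
    -- extend d' to permutations of Fin (n+1)
    have hdinj : ∀ i, Function.Injective
        (fun k : Fin (n+1) => Fin.lastCases (motive := fun _ => Fin (n+1)) (j i) (fun k' => (j i).succAbove (d' i k')) k) := by
      intro i a b hab
      rcases Fin.eq_castSucc_or_eq_last a with ⟨a', rfl⟩ | rfl <;>
        rcases Fin.eq_castSucc_or_eq_last b with ⟨b', rfl⟩ | rfl <;>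
        simp only [Fin.lastCases_last, Fin.lastCases_castSucc] at hab
      · have := (d' i).injective ((j i).succAbove_right_injective hab)
        rw [this]
      · exact absurd hab ((j i).succAbove_ne _)
      · exact absurd hab.symm ((j i).succAbove_ne _)
      · rfl
    set d : Fin m → Equiv.Perm (Fin (n+1)) := fun i =>
      Equiv.ofBijective _ (Finite.injective_iff_bijective.mp (hdinj i)) with hd
    refine ⟨d, fun k => ?_⟩
    rcases Fin.eq_castSucc_or_eq_last k with ⟨k', rfl⟩ | rfl
    · have heq : (fun i => g (i, d i (Fin.castSucc k'))) = fun i => g' (i, d' i k') := by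
        funext i
        have hdi : d i (Fin.castSucc k') = (j i).succAbove (d' i k') := by
          show (Fin.lastCases (motive := fun _ => Fin (n+1)) (j i) (fun k' => (j i).succAbove (d' i k')) (Fin.castSucc k')
            : Fin (n+1)) = _
          simp only [Fin.lastCases_castSucc]
        rw [hdi]
      rw [heq]; exact hd' k'
    · have heq : (fun i => g (i, d i (Fin.last n))) = h := by
        funext i
        have hdi : d i (Fin.last n) = j i := by
          show (Fin.lastCases (motive := fun _ => Fin (n+1)) (j i) (fun k' => (j i).succAbove (d' i k')) (Fin.last n)
            : Fin (n+1)) = _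
          simp only [Fin.lastCases_last]
        rw [hdi, hj]
      rw [heq]; exact hinj

/-- Every permutation of [m] × [n] is a composition σ₂ ∘ σ₁ ∘ σ₂' where σ₂, σ₂'
affect only the second coordinate and σ₁ affects only the first coordinate. -/
theorem two_dim_box_decomposition (m n : ℕ) (σ : Equiv.Perm (Fin m × Fin n)) :
    ∃ σ₂ σ₁ σ₂' : Equiv.Perm (Fin m × Fin n),
      (∀ x, (σ₂ x).1 = x.1) ∧ (∀ x, (σ₁ x).2 = x.2) ∧ (∀ x, (σ₂' x).1 = x.1) ∧
      σ = σ₂ * σ₁ * σ₂' := by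
  have hfib : ∀ i', (univ.filter fun x : Fin m × Fin n => (σ x).1 = i').card = n := by
    intro i'
    have h1 : (univ.filter fun x : Fin m × Fin n => (σ x).1 = i').image σ
        = univ.filter fun x : Fin m × Fin n => x.1 = i' := by
      ext y
      simp only [Finset.mem_image, Finset.mem_filter, mem_univ, true_and]
      constructor
      · rintro ⟨x, hx, rfl⟩; exact hx
      · intro hy; exact ⟨σ.symm y, by simpa using hy, σ.apply_symm_apply y⟩
    have h2 : (univ.filter fun x : Fin m × Fin n => x.1 = i') = {i'} ×ˢ univ := by
      ext x
      simp only [Finset.mem_filter, mem_univ, true_and, Finset.mem_product,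
        Finset.mem_singleton]
      exact ⟨fun h => ⟨h, trivial⟩, fun h => h.1⟩
    rw [← Finset.card_image_of_injective _ σ.injective, h1, h2, Finset.card_product]
    simp
  obtain ⟨d, hd⟩ := two_dim_core m n (fun x => (σ x).1) hfib
  set r : Fin n → Equiv.Perm (Fin m) := fun k =>
    Equiv.ofBijective _ (Finite.injective_iff_bijective.mp (hd k)) with hr
  set σ₂' : Equiv.Perm (Fin m × Fin n) :=
    Equiv.prodShear (Equiv.refl (Fin m)) (fun i => (d i).symm) with hσ₂'
  set σ₁ : Equiv.Perm (Fin m × Fin n) :=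
    (Equiv.prodComm (Fin m) (Fin n)).trans
      ((Equiv.prodShear (Equiv.refl (Fin n)) r).trans (Equiv.prodComm (Fin n) (Fin m))) with hσ₁
  refine ⟨σ * σ₂'⁻¹ * σ₁⁻¹, σ₁, σ₂', ?_, ?_, ?_, ?_⟩
  · intro x
    have hx1 : σ₁⁻¹ x = ((r x.2).symm x.1, x.2) := rfl
    have hx2 : σ₂'⁻¹ (((r x.2).symm x.1, x.2) : Fin m × Fin n)
        = ((r x.2).symm x.1, d ((r x.2).symm x.1) x.2) := by
      rw [Equiv.Perm.inv_def, Equiv.symm_apply_eq]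
      simp [hσ₂', Equiv.prodShear]
    have : (σ * σ₂'⁻¹ * σ₁⁻¹) x
        = σ ((r x.2).symm x.1, d ((r x.2).symm x.1) x.2) := by
      simp only [Equiv.Perm.mul_apply, hx1, hx2]
    rw [this]
    have : (σ ((r x.2).symm x.1, d ((r x.2).symm x.1) x.2)).1
        = r x.2 ((r x.2).symm x.1) := rfl
    rw [this, Equiv.apply_symm_apply]
  · intro x; rfl
  · intro x; rfl
  · group
end

section
/- Let L be a finite set of labels with |L| = m, and let A be an m × n matrix with entries in L such that each label ℓ ∈ L appears in exactly n entries of A. Then there exist permutations σ₁,…,σ_m ∈ S_n such that the matrix à defined by Ã_{ij} = A_{i,σ_i(j)} has the property that every column of à contains all m distinct labels. -/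
open Finset

/-- One step of the construction: Hall's theorem gives, for each label, an entry of the
matrix with that label, lying in pairwise distinct rows. -/
private lemma exists_matching {L : Type*} [Fintype L] [DecidableEq L] (m k : ℕ)
    (hL : Fintype.card L = m) (A : Fin m → Fin (k + 1) → L)
    (hA : ∀ ℓ : L,
      (Finset.univ.filter fun p : Fin m × Fin (k + 1) => A p.1 p.2 = ℓ).card = k + 1) :
    ∃ f : L → Fin m, Function.Injective f ∧ ∀ ℓ, ∃ j, A (f ℓ) j = ℓ := by
  classical
  set t : L → Finset (Fin m) := fun ℓ => univ.filter (fun i => ∃ j, A i j = ℓ) with ht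
  have hall : ∀ s : Finset L, s.card ≤ (s.biUnion t).card := by
    intro s
    set P : Finset (Fin m × Fin (k + 1)) := univ.filter (fun p => A p.1 p.2 ∈ s) with hP
    have hcard : P.card = s.card * (k + 1) := by
      have : P = s.biUnion (fun ℓ => univ.filter (fun p : Fin m × Fin (k+1) => A p.1 p.2 = ℓ)) := by
        ext p
        simp [hP]
      rw [this, Finset.card_biUnion]
      · rw [Finset.sum_congr rfl (fun ℓ _ => hA ℓ), Finset.sum_const, smul_eq_mul]
      · intro x _ y _ hxy
        simp only [Finset.disjoint_left, mem_filter]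
        rintro p ⟨_, h1⟩ ⟨_, h2⟩
        exact hxy (h1 ▸ h2 ▸ rfl)
    have hsub : P ⊆ (s.biUnion t) ×ˢ (univ : Finset (Fin (k + 1))) := by
      intro p hp
      simp only [hP, mem_filter, mem_univ, true_and] at hp
      simp only [mem_product, mem_univ, and_true, mem_biUnion]
      refine ⟨A p.1 p.2, hp, ?_⟩
      simp only [ht, mem_filter, mem_univ, true_and]
      exact ⟨p.2, rfl⟩
    have := Finset.card_le_card hsub
    rw [hcard, Finset.card_product] at this
    simp only [Finset.card_univ, Fintype.card_fin] at this
    exact Nat.le_of_mul_le_mul_right this (Nat.succ_pos k)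
  obtain ⟨f, hf_inj, hf_mem⟩ := (Finset.all_card_le_biUnion_card_iff_exists_injective t).mp hall
  refine ⟨f, hf_inj, fun ℓ => ?_⟩
  have := hf_mem ℓ
  simp only [ht, mem_filter] at this
  exact this.2

/-- Auxiliary induction for `well_dispersed`, inducting on the number of columns. -/
private lemma well_dispersed_aux {L : Type*} [Fintype L] [DecidableEq L] (m : ℕ)
    (hL : Fintype.card L = m) :
    ∀ (k : ℕ) (A : Fin m → Fin k → L),
      (∀ ℓ : L, (Finset.univ.filter fun p : Fin m × Fin k => A p.1 p.2 = ℓ).card = k) →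
      ∃ σ : Fin m → Equiv.Perm (Fin k), ∀ (j : Fin k) (ℓ : L), ∃ i : Fin m, A i (σ i j) = ℓ := by
  intro k
  induction k with
  | zero => exact fun A _ => ⟨fun _ => 1, fun j => j.elim0⟩
  | succ k ih =>
    intro A hA
    classical
    obtain ⟨f, hf_inj, hf_mem⟩ := exists_matching m k hL A hA
    have hf_bij : Function.Bijective f := by
      rw [Fintype.bijective_iff_injective_and_card, Fintype.card_fin, hL]
      exact ⟨hf_inj, rfl⟩
    set e : L ≃ Fin m := Equiv.ofBijective f hf_bij with he
    -- choose the witness column in each row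
    have hc : ∀ i : Fin m, ∃ j, A i j = e.symm i := by
      intro i
      have := hf_mem (e.symm i)
      have hfi : f (e.symm i) = i := e.apply_symm_apply i
      rwa [hfi] at this
    choose c hcA using hc
    -- remove the chosen entries
    set B : Fin m → Fin k → L := fun i j => A i ((c i).succAbove j) with hB
    have hBcount : ∀ ℓ : L,
        (Finset.univ.filter fun p : Fin m × Fin k => B p.1 p.2 = ℓ).card = k := by
      intro ℓ
      have hmem : (e ℓ, c (e ℓ)) ∈
          (Finset.univ.filter fun p : Fin m × Fin (k+1) => A p.1 p.2 = ℓ) := by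
        simp only [mem_filter, mem_univ, true_and]
        rw [hcA (e ℓ), e.symm_apply_apply]
      have key : ((Finset.univ.filter fun p : Fin m × Fin (k+1) => A p.1 p.2 = ℓ).erase
          (e ℓ, c (e ℓ))).card = k := by
        rw [Finset.card_erase_of_mem hmem, hA]
        omega
      refine Eq.trans ?_ key
      clear key hmem
      apply Finset.card_bij (fun p _ => (p.1, (c p.1).succAbove p.2))
      · intro p hp
        simp only [mem_filter, mem_univ, true_and, hB] at hp
        rw [Finset.mem_erase]
        constructor
        · intro hcon
          have : (c p.1).succAbove p.2 = c p.1 := by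
            have h1 : p.1 = e ℓ := congrArg Prod.fst hcon
            have h2 : (c p.1).succAbove p.2 = c (e ℓ) := congrArg Prod.snd hcon
            rw [h1] at h2 ⊢; exact h2
          exact Fin.succAbove_ne _ _ this
        · simp only [mem_filter, mem_univ, true_and]
          exact hp
      · intro p hp q hq hpq
        simp only [Prod.mk.injEq] at hpq
        obtain ⟨h1, h2⟩ := hpq
        rw [h1] at h2
        exact Prod.ext h1 ((c q.1).succAbove_right_injective h2)
      · intro p hp
        rw [Finset.mem_erase, mem_filter] at hp
        obtain ⟨hne, -, hpℓ⟩ := hp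
        have hj : p.2 ≠ c p.1 := by
          intro hcon
          apply hne
          have hi : p.1 = e ℓ := by
            have : e.symm p.1 = ℓ := by rw [← hpℓ, hcon, hcA]
            rw [← this, e.apply_symm_apply]
          exact Prod.ext hi (by rw [← hi, hcon])
        obtain ⟨j, hj'⟩ := Fin.exists_succAbove_eq hj
        refine ⟨(p.1, j), ?_, ?_⟩
        · simp only [mem_filter, mem_univ, true_and, hB, hj', hpℓ]
        · exact Prod.ext rfl hj'
    obtain ⟨τ, hτ⟩ := ih B hBcount
    refine ⟨fun i => ((finSuccEquiv k).trans (Equiv.optionCongr (τ i))).trans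
      (finSuccEquiv' (c i)).symm, fun j ℓ => ?_⟩
    induction j using Fin.cases with
    | zero =>
      refine ⟨e ℓ, ?_⟩
      simp only [Equiv.trans_apply, finSuccEquiv_zero, Equiv.optionCongr_apply, Option.map_none]
      rw [show (finSuccEquiv' (c (e ℓ))).symm none = c (e ℓ) from
        (Equiv.symm_apply_eq _).mpr (finSuccEquiv'_at _).symm]
      rw [hcA (e ℓ), e.symm_apply_apply]
    | succ j =>
      obtain ⟨i, hi⟩ := hτ j ℓ
      refine ⟨i, ?_⟩
      simp only [Equiv.trans_apply, finSuccEquiv_succ, Equiv.optionCongr_apply, Option.map_some]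
      rw [show (finSuccEquiv' (c i)).symm (some (τ i j)) = (c i).succAbove (τ i j) from
        (Equiv.symm_apply_eq _).mpr (finSuccEquiv'_succAbove _ _).symm]
      exact hi

/-- Well-dispersed lemma: if an m × n matrix over a label set of size m contains each
label in exactly n entries, then the entries of each row may be permuted so that every
column contains all m labels. -/
theorem well_dispersed {L : Type*} [Fintype L] [DecidableEq L] (m n : ℕ)
    (hL : Fintype.card L = m) (A : Fin m → Fin n → L)
    (hA : ∀ ℓ : L,
      (Finset.univ.filter fun p : Fin m × Fin n => A p.1 p.2 = ℓ).card = n) :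
    ∃ σ : Fin m → Equiv.Perm (Fin n),
      ∀ (j : Fin n) (ℓ : L), ∃ i : Fin m, A i (σ i j) = ℓ := by
  exact well_dispersed_aux m hL n A hA
end

section
/- The swap permutation σ on X = [n₁] × ⋯ × [n_d] (with all nᵢ ≥ 2) that exchanges (1,…,1) and (2,…,2) and fixes all other points cannot be written as a composition of fewer than 2d−1 one-dimensional permutations. -/
/-- The permutation swapping (1,…,1) and (2,…,2) (the points with all coordinates 0
resp. all coordinates 1 in 0-indexed notation) in a box with all sides at least 2
cannot be written as a composition of fewer than 2d-1 one-dimensional permutations. -/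
theorem swap_needs_many_one_dim (d : ℕ) (n : Fin d → ℕ) (hn : ∀ i, 2 ≤ n i)
    (a b : ∀ i, Fin (n i)) (ha : ∀ i, (a i).val = 0) (hb : ∀ i, (b i).val = 1)
    (l : List (Equiv.Perm (∀ i, Fin (n i))))
    (hl : ∀ τ ∈ l, IsOneDimensional τ) (hprod : Equiv.swap a b = l.prod) :
    2 * d - 1 ≤ l.length := by
  classical
  by_contra hlt
  push_neg at hlt
  have hd : 1 ≤ d := by omega
  have habneq : ∀ c, a c ≠ b c := by
    intro c h
    have := congrArg Fin.val h
    rw [ha c, hb c] at this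
    omega
  -- choose a direction for each permutation in the list
  choose dir hdir using fun s : Fin l.length => hl (l.get s) (l.get_mem s)
  -- suffix products
  set F : ℕ → Equiv.Perm (∀ i, Fin (n i)) := fun t => (l.drop t).prod with hF
  have hF0 : ∀ x, F 0 x = Equiv.swap a b x := by
    intro x; simp [hF, ← hprod]
  have hFlen : ∀ x, F l.length x = x := by
    intro x; simp [hF, List.drop_length]
  have hstep : ∀ (t : ℕ) (ht : t < l.length) (x : ∀ i, Fin (n i)),
      F t x = l.get ⟨t, ht⟩ (F (t + 1) x) := by
    intro t ht x
    simp only [hF]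
    rw [List.drop_eq_getElem_cons ht, List.prod_cons, Equiv.Perm.mul_apply]
    rfl
  -- if no step in [t, t+m) has direction c, coordinate c is constant there
  have hconst : ∀ (c : Fin d) (x : ∀ i, Fin (n i)) (m t : ℕ), t + m ≤ l.length →
      (∀ s : Fin l.length, t ≤ (s : ℕ) → (s : ℕ) < t + m → dir s ≠ c) →
      (F t x) c = (F (t + m) x) c := by
    intro c x m
    induction m with
    | zero => intro t _ _; rfl
    | succ m ih =>
      intro t htm hnone
      have ht : t < l.length := by omega
      have hne : c ≠ dir ⟨t, ht⟩ := by
        intro h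
        exact hnone ⟨t, ht⟩ (by simp) (by simp only [Fin.val_mk]; omega) h.symm
      have h1 : (F t x) c = (F (t + 1) x) c := by
        rw [hstep t ht x, hdir ⟨t, ht⟩ (F (t + 1) x) c hne]
      have h2 := ih (t + 1) (by omega)
        (fun s hs1 hs2 => hnone s (by omega) (by omega))
      rw [h1, h2, show t + 1 + m = t + (m + 1) by omega]
  -- tail version: coordinate c constant from t to the end
  have htail : ∀ (c : Fin d) (x : ∀ i, Fin (n i)) (t : ℕ), t ≤ l.length →
      (∀ s : Fin l.length, t ≤ (s : ℕ) → dir s ≠ c) → (F t x) c = x c := by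
    intro c x t ht hnone
    have := hconst c x (l.length - t) t (by omega)
      (fun s hs1 _ => hnone s hs1)
    rw [this, show t + (l.length - t) = l.length by omega, hFlen]
  -- the key geometric argument
  have key : ∀ (i j : Fin d) (p q : Fin l.length), i ≠ j →
      (∀ s : Fin l.length, dir s = i ↔ s = p) →
      (∀ s : Fin l.length, dir s = j ↔ s = q) → (q : ℕ) < (p : ℕ) → False := by
    intro i j p q hij hp hq hqp
    have hdp : dir p = i := (hp p).mpr rfl
    -- coordinate i is constant after step p
    have hup : ∀ x, (F (↑p + 1) x) i = x i := by
      intro x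
      refine htail i x (↑p + 1) (by omega) ?_
      intro s hs h
      have h2 := congrArg Fin.val ((hp s).mp h)
      omega
    -- coordinate j is constant after step p (its only step q is before p)
    have hupj : ∀ x, (F (↑p + 1) x) j = x j := by
      intro x
      refine htail j x (↑p + 1) (by omega) ?_
      intro s hs h
      have h2 := congrArg Fin.val ((hq s).mp h)
      omega
    -- coordinate i is constant before step p
    have hlow : ∀ x, (Equiv.swap a b x) i = (F (↑p) x) i := by
      intro x
      have h0 := hconst i x (↑p) 0 (by omega) ?_
      · rw [← hF0 x, h0, show 0 + (p:ℕ) = (p:ℕ) by omega]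
      · intro s _ hs2 h
        have h2 := congrArg Fin.val ((hp s).mp h)
        omega
    have hstep' : ∀ x, F (↑p) x = l.get p (F (↑p + 1) x) :=
      fun x => hstep ↑p p.isLt x
    have hτ : ∀ x c, c ≠ i → l.get p x c = x c := by
      intro x c hc
      exact hdir p x c (by rw [hdp]; exact hc)
    -- all trajectories other than a's and b's are fixed by step p
    have hfix : ∀ x, x ≠ a → x ≠ b → l.get p (F (↑p + 1) x) = F (↑p + 1) x := by
      intro x hxa hxb
      funext c
      by_cases hc : c = i
      · subst hc
        rw [← hstep' x]
        rw [hup x, ← hlow x, Equiv.swap_apply_of_ne_of_ne hxa hxb]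
      · exact hτ _ c hc
    -- step p must send a's trajectory point to b's
    have hw : l.get p (F (↑p + 1) a) = F (↑p) a := (hstep' a).symm
    have hwi : (F (↑p) a) i = b i := by rw [← hlow a, Equiv.swap_apply_left]
    have hAi : (F (↑p + 1) a) i = a i := hup a
    set y := (F (↑p + 1)).symm (F (↑p) a) with hy
    have hyw : F (↑p + 1) y = F (↑p) a := Equiv.apply_symm_apply _ _
    have hya : y ≠ a := by
      intro h
      rw [h] at hyw
      have := congrArg (fun z => z i) hyw
      rw [hAi, hwi] at this
      exact habneq i this
    have hyb : y = b := by
      by_contra hyb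
      have hfy := hfix y hya hyb
      rw [hyw] at hfy
      have hinj := (l.get p).injective (hw.trans hfy.symm)
      have := congrArg (fun z => z i) hinj
      rw [hAi, hwi] at this
      exact habneq i this
    have hmove : l.get p (F (↑p + 1) a) = F (↑p + 1) b := by
      rw [hw, ← hyw, hyb]
    -- conclude: coordinate j of a's and b's trajectories agree before step p
    have hBj : (F (↑p + 1) b) j = (F (↑p + 1) a) j := by
      rw [← hmove]
      exact hτ _ j (Ne.symm hij)
    have hAj : (F (↑p + 1) a) j = a j := hupj a
    have hBj' : (F (↑p + 1) b) j = b j := hupj b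
    exact habneq j (by rw [← hAj, ← hBj]; exact hBj')
  -- counting: every direction is used; at most 2d-2 steps force two directions
  -- used exactly once
  set fib : Fin d → Finset (Fin l.length) :=
    fun c => Finset.univ.filter (fun s => dir s = c) with hfib
  have hsum : ∑ c, (fib c).card = l.length := by
    have := (Finset.card_eq_sum_card_fiberwise
      (f := dir) (s := Finset.univ) (t := Finset.univ)
      (fun x _ => Finset.mem_univ _)).symm
    simpa [hfib] using this
  have hpos : ∀ c, 1 ≤ (fib c).card := by
    intro c
    by_contra h
    push_neg at h
    have hempty : fib c = ∅ := Finset.card_eq_zero.mp (by omega)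
    have hnone : ∀ s : Fin l.length, dir s ≠ c := by
      intro s hs
      have hmem : s ∈ fib c := by simp [hfib, hs]
      rw [hempty] at hmem
      exact absurd hmem (Finset.notMem_empty s)
    have h0 := htail c a 0 (by omega) (fun s _ => hnone s)
    rw [hF0, Equiv.swap_apply_left] at h0
    exact habneq c h0.symm
  set T := Finset.univ.filter (fun c : Fin d => 2 ≤ (fib c).card) with hT
  set S := Finset.univ.filter (fun c : Fin d => ¬ 2 ≤ (fib c).card) with hS
  have hTS : T.card + S.card = d := by
    rw [hT, hS, Finset.card_filter_add_card_filter_not]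
    simp
  have hge : 2 * T.card + 1 * S.card ≤ ∑ c, (fib c).card := by
    rw [← Finset.sum_filter_add_sum_filter_not Finset.univ
      (fun c => 2 ≤ (fib c).card)]
    refine Nat.add_le_add ?_ ?_
    · calc 2 * T.card = T.card • 2 := by rw [smul_eq_mul]; ring
        _ ≤ _ := Finset.card_nsmul_le_sum T _ 2
              (fun c hc => (Finset.mem_filter.mp hc).2)
    · calc 1 * S.card = S.card • 1 := by rw [smul_eq_mul]; ring
        _ ≤ _ := Finset.card_nsmul_le_sum S _ 1 (fun c _ => hpos c)
  rw [hsum] at hge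
  have hScard : 1 < S.card := by omega
  obtain ⟨i, hiS, j, hjS, hij⟩ := Finset.one_lt_card.mp hScard
  have hsingle : ∀ c ∈ S, ∃ p : Fin l.length, ∀ s, dir s = c ↔ s = p := by
    intro c hc
    have hle : ¬ 2 ≤ (fib c).card := (Finset.mem_filter.mp hc).2
    have h1 : (fib c).card = 1 := by have := hpos c; omega
    obtain ⟨p, hp⟩ := Finset.card_eq_one.mp h1
    refine ⟨p, fun s => ?_⟩
    rw [show (dir s = c) ↔ s ∈ fib c by simp [hfib], hp, Finset.mem_singleton]
  obtain ⟨p, hp⟩ := hsingle i hiS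
  obtain ⟨q, hq⟩ := hsingle j hjS
  have hpq : p ≠ q := by
    intro h
    apply hij
    rw [← (hp p).mpr rfl, h, (hq q).mpr rfl]
  rcases Nat.lt_or_ge (p : ℕ) (q : ℕ) with h | h
  · exact key j i q p (Ne.symm hij) hq hp h
  · exact key i j p q hij hp hq
      (lt_of_le_of_ne h (fun hh => hpq (Fin.val_injective hh.symm)))
end

section
/- Let H and G be graphs. If H is a minor of G, then there exists a combinatorial embedding of H into G. -/
open SimpleGraph

/-- `H` is a minor of `G`: there is a model of `H` in `G`, i.e. a family of nonempty,
pairwise-disjoint connected branch sets in `G` indexed by the vertices of `H`, with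
adjacent vertices of `H` having branch sets joined by an edge of `G`. -/
def SimpleGraph.IsMinorOf {V W : Type*} (H : SimpleGraph V) (G : SimpleGraph W) : Prop :=
  ∃ μ : V → Set W,
    (∀ a, (G.induce (μ a)).Connected) ∧
    (Pairwise fun a b => Disjoint (μ a) (μ b)) ∧
    ∀ ⦃a b⦄, H.Adj a b → ∃ x ∈ μ a, ∃ y ∈ μ b, G.Adj x y

/-- A combinatorial embedding of `H` into `G`: vertices map injectively to vertices,
each edge maps to a walk (road) between the images of its endpoints, roads of
non-adjacent edges are vertex-disjoint, and the image of a vertex not lying on an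
edge avoids the road of that edge. -/
structure CombEmbedding {V W : Type*} (H : SimpleGraph V) (G : SimpleGraph W) where
  vmap : V → W
  inj : Function.Injective vmap
  road : ∀ ⦃a b⦄, H.Adj a b → G.Walk (vmap a) (vmap b)
  disj : ∀ ⦃a b c d⦄ (h₁ : H.Adj a b) (h₂ : H.Adj c d),
    a ≠ c → a ≠ d → b ≠ c → b ≠ d →
    ∀ x, x ∈ (road h₁).support → x ∉ (road h₂).support
  iso : ∀ ⦃a b⦄ (h : H.Adj a b) (w : V), w ≠ a → w ≠ b → vmap w ∉ (road h).support

/-- Cartesian (box) product of a family of graphs: two functions are adjacent iff they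
differ in exactly one coordinate, where they are adjacent. -/
def prodGraph {ι : Type*} {V : ι → Type*} (G : ∀ i, SimpleGraph (V i)) :
    SimpleGraph (∀ i, V i) where
  Adj x y := ∃ i, (G i).Adj (x i) (y i) ∧ ∀ j, j ≠ i → x j = y j
  symm := by
    constructor
    rintro x y ⟨i, hadj, hj⟩
    exact ⟨i, hadj.symm, fun j hji => (hj j hji).symm⟩
  loopless := by
    constructor
    rintro x ⟨i, hadj, -⟩
    exact (G i).irrefl hadj

/-- If H is a minor of G, there is a combinatorial embedding of H into G. -/
theorem minor_to_combEmbedding {V W : Type*} (H : SimpleGraph V) (G : SimpleGraph W)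
    (h : H.IsMinorOf G) : Nonempty (CombEmbedding H G) := by
  classical
  obtain ⟨μ, hconn, hdisj, hadj⟩ := h
  have hne : ∀ a, (μ a).Nonempty := fun a => by
    obtain ⟨⟨z, hz⟩⟩ := (hconn a).nonempty
    exact ⟨z, hz⟩
  choose v hv using hne
  choose x hx y hy hxy using fun a b (hab : H.Adj a b) => hadj hab
  have walkIn : ∀ a (p q : W) (_ : p ∈ μ a) (_ : q ∈ μ a),
      ∃ wk : G.Walk p q, ∀ z ∈ wk.support, z ∈ μ a := by
    intro a p q hp hq
    obtain ⟨wk⟩ := (hconn a) ⟨p, hp⟩ ⟨q, hq⟩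
    refine ⟨wk.map (SimpleGraph.Embedding.induce (μ a)).toHom, ?_⟩
    intro z hz
    replace hz : z ∈ (wk.map (SimpleGraph.Embedding.induce (μ a)).toHom).support := hz
    rw [Walk.support_map] at hz
    obtain ⟨⟨u, hu⟩, -, rfl⟩ := List.mem_map.mp hz
    exact hu
  choose wk hwk using walkIn
  let road : ∀ ⦃a b⦄, H.Adj a b → G.Walk (v a) (v b) := fun a b hab =>
    (wk a (v a) (x a b hab) (hv a) (hx a b hab)).append
      (Walk.cons (hxy a b hab) (wk b (y a b hab) (v b) (hy a b hab) (hv b)))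
  have hsup : ∀ ⦃a b⦄ (hab : H.Adj a b) (z : W), z ∈ (road hab).support → z ∈ μ a ∪ μ b := by
    intro a b hab z hz
    rw [Walk.mem_support_append_iff] at hz
    rcases hz with hz | hz
    · exact Or.inl (hwk a _ _ _ _ z hz)
    · rw [Walk.support_cons, List.mem_cons] at hz
      rcases hz with rfl | hz
      · exact Or.inl (hx a b hab)
      · exact Or.inr (hwk b _ _ _ _ z hz)
  refine ⟨⟨v, ?_, road, ?_, ?_⟩⟩
  · intro a b hvab
    by_contra hne'
    exact Set.disjoint_left.mp (hdisj hne') (hv a) (hvab ▸ hv b)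
  · intro a b c d h₁ h₂ hac had hbc hbd z hz₁ hz₂
    rcases hsup h₁ z hz₁ with hz | hz <;> rcases hsup h₂ z hz₂ with hz' | hz'
    · exact Set.disjoint_left.mp (hdisj hac) hz hz'
    · exact Set.disjoint_left.mp (hdisj had) hz hz'
    · exact Set.disjoint_left.mp (hdisj hbc) hz hz'
    · exact Set.disjoint_left.mp (hdisj hbd) hz hz'
  · intro a b hab w hwa hwb hz
    rcases hsup hab (v w) hz with hz' | hz'
    · exact Set.disjoint_left.mp (hdisj hwa) (hv w) hz'
    · exact Set.disjoint_left.mp (hdisj hwb) (hv w) hz'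
end

section
/- If there exists a model of a graph H in a graph G (a family of vertex-disjoint connected subgraphs of G indexed by V(H) such that adjacent vertices of H have subgraphs joined by an edge of G), then there exists a combinatorial embedding of H into G. -/
open SimpleGraph

/-- If there is a model of H in G, there is a combinatorial embedding of H into G. -/
theorem model_to_combEmbedding {V W : Type*} (H : SimpleGraph V) (G : SimpleGraph W)
    (μ : V → Set W)
    (hconn : ∀ a, (G.induce (μ a)).Connected)
    (hdisj : Pairwise fun a b => Disjoint (μ a) (μ b))
    (hadj : ∀ ⦃a b⦄, H.Adj a b → ∃ x ∈ μ a, ∃ y ∈ μ b, G.Adj x y) :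
    Nonempty (CombEmbedding H G) := by
  classical
  have hne : ∀ a, ∃ x, x ∈ μ a := fun a => by
    obtain ⟨⟨x, hx⟩⟩ := (hconn a).nonempty
    exact ⟨x, hx⟩
  choose v hv using hne
  have key : ∀ ⦃a b⦄, H.Adj a b →
      ∃ p : G.Walk (v a) (v b), ∀ z ∈ p.support, z ∈ μ a ∪ μ b := by
    intro a b h
    obtain ⟨x, hx, y, hy, hxy⟩ := hadj h
    obtain ⟨w1⟩ := (hconn a).preconnected ⟨v a, hv a⟩ ⟨x, hx⟩
    obtain ⟨w2⟩ := (hconn b).preconnected ⟨y, hy⟩ ⟨v b, hv b⟩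
    refine ⟨(w1.map (Embedding.induce (μ a)).toHom).append
      (Walk.cons hxy (w2.map (Embedding.induce (μ b)).toHom)), ?_⟩
    intro z hz
    rcases (SimpleGraph.Walk.mem_support_append_iff _ _).mp hz with h1 | h1
    · change z ∈ (w1.map (Embedding.induce (μ a)).toHom).support at h1
      rw [SimpleGraph.Walk.support_map, List.mem_map] at h1
      obtain ⟨u, -, rfl⟩ := h1
      exact Or.inl u.2
    · change z ∈ x :: (w2.map (Embedding.induce (μ b)).toHom).support at h1
      rw [List.mem_cons] at h1
      rcases h1 with rfl | h2
      · exact Or.inl hx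
      · rw [SimpleGraph.Walk.support_map, List.mem_map] at h2
        obtain ⟨u, -, rfl⟩ := h2
        exact Or.inr u.2
  choose road hroad using key
  have hvinj : Function.Injective v := by
    intro a b hab
    by_contra hne'
    exact Set.disjoint_left.mp (hdisj hne') (hv a) (hab ▸ hv b)
  refine ⟨⟨v, hvinj, road, ?_, ?_⟩⟩
  · intro a b c d h1 h2 hac had hbc hbd x hx1 hx2
    rcases hroad h1 x hx1 with hx | hx <;> rcases hroad h2 x hx2 with hy | hy
    · exact Set.disjoint_left.mp (hdisj hac) hx hy
    · exact Set.disjoint_left.mp (hdisj had) hx hy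
    · exact Set.disjoint_left.mp (hdisj hbc) hx hy
    · exact Set.disjoint_left.mp (hdisj hbd) hx hy
  · intro a b h w hwa hwb hmem
    rcases hroad h _ hmem with hx | hx
    · exact Set.disjoint_left.mp (hdisj hwa) (hv w) hx
    · exact Set.disjoint_left.mp (hdisj hwb) (hv w) hx
end

section
/- For any graph Γ with no isolated vertices and m edges, there exists a graph Γ′ with maximum degree at most 3 and at most 4m vertices such that Γ is a minor of Γ′. -/
open SimpleGraph

lemma connected_of_consec {N : ℕ} (G : SimpleGraph (Fin N)) (s : Set (Fin N))
    (hne : s.Nonempty)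
    (hadj : ∀ i ∈ s, ∀ j ∈ s, i < j → (∀ k ∈ s, ¬(i < k ∧ k < j)) → G.Adj i j) :
    (G.induce s).Connected := by
  classical
  have hfin : s.Finite := s.toFinite
  set t : Finset (Fin N) := hfin.toFinset with ht
  have hts : ∀ x, x ∈ t ↔ x ∈ s := fun x => hfin.mem_toFinset
  have htne : t.Nonempty := hne.imp fun x hx => (hts x).2 hx
  set m0 := t.min' htne with hm0
  have hm0s : m0 ∈ s := (hts m0).1 (t.min'_mem htne)
  have key : ∀ n : ℕ, ∀ i, (hi : i ∈ s) → (i : ℕ) = n →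
      (G.induce s).Reachable ⟨m0, hm0s⟩ ⟨i, hi⟩ := by
    intro n
    induction n using Nat.strong_induction_on with
    | _ n ih =>
      rintro i hi rfl
      rcases eq_or_ne i m0 with h | h
      · subst h; exact Reachable.refl _
      · have hm0i : m0 < i := lt_of_le_of_ne (t.min'_le i ((hts i).2 hi)) (Ne.symm h)
        set f := t.filter (fun k => k < i) with hf
        have hfne : f.Nonempty := ⟨m0, Finset.mem_filter.2 ⟨t.min'_mem htne, hm0i⟩⟩
        set u := f.max' hfne with hu
        have huf : u ∈ f := f.max'_mem hfne
        have hus : u ∈ s := (hts u).1 (Finset.mem_filter.1 huf).1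
        have hui : u < i := (Finset.mem_filter.1 huf).2
        have hadjui : G.Adj u i := by
          refine hadj u hus i hi hui fun k hk hk2 => ?_
          have : k ∈ f := Finset.mem_filter.2 ⟨(hts k).2 hk, hk2.2⟩
          exact absurd (f.le_max' k this) (not_le.2 hk2.1)
        have hstep : (G.induce s).Adj ⟨u, hus⟩ ⟨i, hi⟩ := hadjui
        exact (ih (u : ℕ) hui u hus rfl).trans hstep.reachable
  haveI : Nonempty s := ⟨⟨m0, hm0s⟩⟩
  exact ⟨fun a b => (key _ a.1 a.2 rfl).symm.trans (key _ b.1 b.2 rfl)⟩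

/-- Every graph with no isolated vertices and m edges is a minor of a graph with
maximum degree at most 3 and at most 4m vertices. -/
theorem minor_of_max_degree_three {V : Type*} [Fintype V] (Γ : SimpleGraph V)
    [DecidableRel Γ.Adj] (hiso : ∀ v, ∃ u, Γ.Adj v u) (m : ℕ)
    (hm : Γ.edgeFinset.card = m) :
    ∃ (N : ℕ) (Γ' : SimpleGraph (Fin N)), N ≤ 4 * m ∧
      (∀ w, (Γ'.neighborSet w).ncard ≤ 3) ∧ Γ.IsMinorOf Γ' := by
  classical
  set N := Fintype.card Γ.Dart with hN
  have hN2 : N = 2 * m := by rw [hN, Γ.dart_card_eq_twice_card_edges, hm]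
  set e : Γ.Dart ≃ Fin N := Fintype.equivFin Γ.Dart with he
  set d : Fin N → Γ.Dart := ⇑e.symm with hd
  have hde : ∀ x : Γ.Dart, d (e x) = x := fun x => e.symm_apply_apply x
  -- consecutive darts with the same tail
  set Consec : Fin N → Fin N → Prop := fun i j =>
    (d i).fst = (d j).fst ∧ ∀ k, (d k).fst = (d i).fst → ¬(min i j < k ∧ k < max i j)
    with hConsec
  have hConsecSymm : ∀ i j, Consec i j → Consec j i := by
    rintro i j ⟨h1, h2⟩
    exact ⟨h1.symm, fun k hk => by
      rw [min_comm, max_comm]; exact h2 k (hk.trans h1.symm)⟩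
  set Γ' : SimpleGraph (Fin N) :=
    { Adj := fun i j => i ≠ j ∧ (d j = (d i).symm ∨ Consec i j)
      symm := by
        constructor
        rintro i j ⟨hne, h | h⟩
        · exact ⟨hne.symm, Or.inl (by rw [h, Dart.symm_symm])⟩
        · exact ⟨hne.symm, Or.inr (hConsecSymm i j h)⟩
      loopless := ⟨fun i h => h.1 rfl⟩ } with hΓ'
  refine ⟨N, Γ', by omega, ?_, ?_⟩
  · -- degree bound
    intro w
    have hsub : Γ'.neighborSet w ⊆
        {e ((d w).symm)} ∪ ({j | Consec w j ∧ j < w} ∪ {j | Consec w j ∧ w < j}) := by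
      rintro j ⟨hne, h | h⟩
      · left
        show j = e ((d w).symm)
        rw [← h, hd, Equiv.apply_symm_apply]
      · right
        rcases lt_or_gt_of_ne (Ne.symm hne) with hlt | hgt
        · exact Or.inl ⟨h, hlt⟩
        · exact Or.inr ⟨h, hgt⟩
    have hA : {j | Consec w j ∧ j < w}.Subsingleton := by
      rintro j1 ⟨hc1, hl1⟩ j2 ⟨hc2, hl2⟩
      by_contra hne
      rcases lt_or_gt_of_ne hne with h12 | h21
      · exact hc1.2 j2 hc2.1.symm ⟨by simpa [min_eq_right hl1.le] using h12,
          by simpa [max_eq_left hl1.le] using hl2⟩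
      · exact hc2.2 j1 hc1.1.symm ⟨by simpa [min_eq_right hl2.le] using h21,
          by simpa [max_eq_left hl2.le] using hl1⟩
    have hB : {j | Consec w j ∧ w < j}.Subsingleton := by
      rintro j1 ⟨hc1, hl1⟩ j2 ⟨hc2, hl2⟩
      by_contra hne
      rcases lt_or_gt_of_ne hne with h12 | h21
      · exact hc2.2 j1 hc1.1.symm ⟨by simpa [min_eq_left hl2.le] using hl1,
          by simpa [max_eq_right hl2.le] using h12⟩
      · exact hc1.2 j2 hc2.1.symm ⟨by simpa [min_eq_left hl1.le] using hl2,
          by simpa [max_eq_right hl1.le] using h21⟩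
    calc (Γ'.neighborSet w).ncard
        ≤ ({e ((d w).symm)} ∪ ({j | Consec w j ∧ j < w} ∪ {j | Consec w j ∧ w < j}) :
            Set (Fin N)).ncard := Set.ncard_le_ncard hsub (Set.toFinite _)
      _ ≤ ({e ((d w).symm)} : Set (Fin N)).ncard
            + ({j | Consec w j ∧ j < w} ∪ {j | Consec w j ∧ w < j}).ncard :=
          Set.ncard_union_le _ _
      _ ≤ 1 + ({j | Consec w j ∧ j < w}.ncard + {j | Consec w j ∧ w < j}.ncard) := by
          gcongr
          · exact le_of_eq (Set.ncard_singleton _)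
          · exact Set.ncard_union_le _ _
      _ ≤ 1 + (1 + 1) := by
          gcongr
          · exact (Set.ncard_le_one (Set.toFinite _)).2 fun a ha b hb => hA ha hb
          · exact (Set.ncard_le_one (Set.toFinite _)).2 fun a ha b hb => hB ha hb
      _ = 3 := rfl
  · -- minor
    refine ⟨fun v => {i | (d i).fst = v}, ?_, ?_, ?_⟩
    · intro v
      obtain ⟨u, hu⟩ := hiso v
      refine connected_of_consec Γ' _ ⟨e ⟨(v, u), hu⟩, by simp [hde]⟩ ?_
      intro i hi j hj hij hbet
      refine ⟨hij.ne, Or.inr ⟨hi.trans hj.symm, fun k hk hk2 => ?_⟩⟩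
      refine hbet k (hk.trans hi) ?_
      rw [min_eq_left hij.le, max_eq_right hij.le] at hk2
      exact hk2
    · intro a b hab
      rw [Set.disjoint_left]
      rintro i (hia : (d i).fst = a) (hib : (d i).fst = b)
      exact hab (hia.symm.trans hib)
    · intro a b hab
      refine ⟨e ⟨(a, b), hab⟩, by simp [hde], e (Dart.symm ⟨(a, b), hab⟩), by simp [hde], ?_⟩
      refine ⟨?_, Or.inl (by rw [hde, hde])⟩
      intro h
      have := congrArg d h
      rw [hde, hde] at this
      exact (Dart.symm_ne _) this.symm
end

section
/- Let Γ be a graph, Y a graph, N ∈ ℕ, and let (f, {γ_e^i}) be an N-piecewise embedding of Γ into Y. Then there exists a combinatorial embedding f̃ of Γ into the Cartesian product C_{N+1} × Y such that f̃(v) = (0, f(v)) for every vertex v of Γ. -/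
open SimpleGraph

/-- An `N`-piecewise embedding of `Γ` into `Y`: an injective vertex map together with,
for each edge, a chain of `N` walks (pieces) whose concatenation joins the images of the
endpoints; pieces with the same index belonging to non-adjacent edges are vertex-disjoint. -/
structure PiecewiseEmbedding {V W : Type*} (Γ : SimpleGraph V) (Y : SimpleGraph W)
    (N : ℕ) where
  vmap : V → W
  inj : Function.Injective vmap
  pt : ∀ ⦃a b⦄, Γ.Adj a b → Fin (N + 1) → W
  pt_first : ∀ ⦃a b⦄ (h : Γ.Adj a b), pt h 0 = vmap a
  pt_last : ∀ ⦃a b⦄ (h : Γ.Adj a b), pt h (Fin.last N) = vmap b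
  piece : ∀ ⦃a b⦄ (h : Γ.Adj a b) (i : Fin N), Y.Walk (pt h i.castSucc) (pt h i.succ)
  disj : ∀ ⦃a b c d⦄ (h₁ : Γ.Adj a b) (h₂ : Γ.Adj c d),
    a ≠ c → a ≠ d → b ≠ c → b ≠ d →
    ∀ (i : Fin N) (x : W), x ∈ (piece h₁ i).support → x ∉ (piece h₂ i).support

section PWEaux

open SimpleGraph

variable {V W : Type*} {Γ : SimpleGraph V} {Y : SimpleGraph W} {N : ℕ}

private lemma cycle_adj_castSucc_succ (i : Fin N) :
    (cycleGraph (N + 1)).Adj i.castSucc i.succ := by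
  rw [cycleGraph_adj']
  right
  have h1 : i.succ - i.castSucc = 1 := by
    rw [← Fin.coeSucc_eq_succ]; exact add_sub_cancel_left _ _
  rw [h1]
  cases N with
  | zero => exact i.elim0
  | succ M => exact Fin.val_one _

private lemma cycle_adj_last_zero (hN : 0 < N) :
    (cycleGraph (N + 1)).Adj (Fin.last N) 0 := by
  rw [cycleGraph_adj']
  right
  have h1 : (0 : Fin (N + 1)) - Fin.last N = 1 := by
    rw [sub_eq_iff_eq_add]
    exact ((add_comm _ _).trans (Fin.last_add_one N)).symm
  rw [h1]
  cases N with
  | zero => omega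
  | succ M => exact Fin.val_one _

variable (P : PiecewiseEmbedding Γ Y N) {a b : V}

include P in
private lemma PWE_N_pos (h : Γ.Adj a b) : 0 < N := by
  rcases Nat.eq_zero_or_pos N with hN | hN
  · have e : (0 : Fin (N + 1)) = Fin.last N := by
      ext
      simp [hN]
    have : P.vmap a = P.vmap b := by
      rw [← P.pt_first h, ← P.pt_last h, e]
    exact absurd (P.inj this) h.ne
  · exact hN

/-- Piece `i` lifted to level `i+1`, preceded by the vertical step up from level `i`. -/
private def PWElift (h : Γ.Adj a b) (i : Fin N) :
    (cycleGraph (N + 1) □ Y).Walk (i.castSucc, P.pt h i.castSucc) (i.succ, P.pt h i.succ) :=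
  Walk.cons
    (show (cycleGraph (N + 1) □ Y).Adj (i.castSucc, P.pt h i.castSucc)
        (i.succ, P.pt h i.castSucc) from Or.inl ⟨cycle_adj_castSucc_succ i, rfl⟩)
    ((P.piece h i).boxProdRight (cycleGraph (N + 1)) i.succ)

private lemma PWElift_support (h : Γ.Adj a b) (i : Fin N) (p : Fin (N + 1) × W) :
    p ∈ (PWElift P h i).support ↔
      p = (i.castSucc, P.pt h i.castSucc) ∨
        (p.1 = i.succ ∧ p.2 ∈ (P.piece h i).support) := by
  rw [PWElift, Walk.support_cons, Walk.boxProdRight]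
  erw [Walk.support_map]
  simp only [List.mem_cons, List.mem_map]
  constructor
  · rintro (rfl | ⟨x, hx, rfl⟩)
    · exact Or.inl rfl
    · exact Or.inr ⟨rfl, hx⟩
  · rintro (rfl | ⟨h1, h2⟩)
    · exact Or.inl rfl
    · refine Or.inr ⟨p.2, h2, ?_⟩
      ext
      · exact congrArg Fin.val h1.symm
      · rfl

private lemma PWE_fin_zero : (0 : Fin (N + 1)) = ⟨0, Nat.succ_pos N⟩ := by
  ext; simp

/-- The chain of the first `k` lifted pieces. -/
private def PWEchain (h : Γ.Adj a b) :
    (k : ℕ) → (hk : k ≤ N) →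
      (cycleGraph (N + 1) □ Y).Walk ((0 : Fin (N + 1)), P.pt h 0)
        ((⟨k, Nat.lt_succ_of_le hk⟩ : Fin (N + 1)), P.pt h ⟨k, Nat.lt_succ_of_le hk⟩)
  | 0, _ => Walk.nil.copy rfl (by rw [PWE_fin_zero])
  | k + 1, hk =>
      (PWEchain h k (Nat.le_of_succ_le hk)).append (PWElift P h ⟨k, hk⟩)

private lemma PWEchain_support (h : Γ.Adj a b) (k : ℕ) (hk : k ≤ N)
    (p : Fin (N + 1) × W) :
    p ∈ (PWEchain P h k hk).support ↔
      p = ((0 : Fin (N + 1)), P.pt h 0) ∨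
        ∃ i : Fin N, i.val < k ∧ p.1 = i.succ ∧ p.2 ∈ (P.piece h i).support := by
  induction k with
  | zero =>
    rw [PWEchain, Walk.support_copy, Walk.support_nil]
    simp only [List.mem_singleton]
    constructor
    · rintro rfl
      exact Or.inl (by rw [PWE_fin_zero])
    · rintro (rfl | ⟨i, hi, -⟩)
      · rw [PWE_fin_zero]
      · omega
  | succ k ih =>
    rw [PWEchain, Walk.mem_support_append_iff, ih (Nat.le_of_succ_le hk),
      PWElift_support]
    constructor
    · rintro ((rfl | ⟨i, hi, h1, h2⟩) | (rfl | ⟨h1, h2⟩))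
      · exact Or.inl rfl
      · exact Or.inr ⟨i, Nat.lt_succ_of_lt hi, h1, h2⟩
      · -- p = (castSucc ⟨k, hk⟩, pt (castSucc ⟨k, hk⟩))
        cases k with
        | zero =>
          left
          have e : (Fin.castSucc ⟨0, hk⟩ : Fin (N + 1)) = 0 := by
            ext; simp
          rw [e]
        | succ m =>
          right
          have hm : m < N := by omega
          refine ⟨⟨m, hm⟩, Nat.lt_succ_of_lt (Nat.lt_succ_self m), rfl, ?_⟩
          show P.pt h ((⟨m, hm⟩ : Fin N).succ) ∈ _
          exact Walk.end_mem_support (P.piece h ⟨m, hm⟩)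
      · exact Or.inr ⟨⟨k, hk⟩, Nat.lt_succ_self k, h1, h2⟩
    · rintro (rfl | ⟨i, hi, h1, h2⟩)
      · exact Or.inl (Or.inl rfl)
      · rcases Nat.lt_or_ge i.val k with hik | hik
        · exact Or.inl (Or.inr ⟨i, hik, h1, h2⟩)
        · have hik' : i.val = k := by omega
          have e : i = (⟨k, hk⟩ : Fin N) := by ext; exact hik'
          subst e
          exact Or.inr (Or.inr ⟨h1, h2⟩)

/-- The full road for an edge: chain of pieces, then the closing cycle edge back to level 0. -/
private def PWEroad (h : Γ.Adj a b) :
    (cycleGraph (N + 1) □ Y).Walk ((0 : Fin (N + 1)), P.vmap a) ((0 : Fin (N + 1)), P.vmap b) :=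
  ((PWEchain P h N le_rfl).append
      (Walk.cons
        (show (cycleGraph (N + 1) □ Y).Adj
            ((⟨N, Nat.lt_succ_self N⟩ : Fin (N + 1)), P.pt h ⟨N, Nat.lt_succ_self N⟩)
            ((0 : Fin (N + 1)), P.pt h ⟨N, Nat.lt_succ_self N⟩) from
          Or.inl ⟨cycle_adj_last_zero (PWE_N_pos P h), rfl⟩)
        Walk.nil)).copy
    (by rw [P.pt_first h]) (show ((0 : Fin (N + 1)), P.pt h (Fin.last N)) = _ by rw [P.pt_last h])

private lemma PWEroad_support (h : Γ.Adj a b) (p : Fin (N + 1) × W) :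
    p ∈ (PWEroad P h).support ↔
      p = ((0 : Fin (N + 1)), P.vmap a) ∨ p = ((0 : Fin (N + 1)), P.vmap b) ∨
        ∃ i : Fin N, p.1 = i.succ ∧ p.2 ∈ (P.piece h i).support := by
  have hN : 0 < N := PWE_N_pos P h
  have hNm : N - 1 < N := by omega
  have elast : (⟨N - 1, hNm⟩ : Fin N).succ = Fin.last N := by
    ext
    simp only [Fin.val_succ, Fin.val_last]
    omega
  have elast' : P.pt h ((⟨N - 1, hNm⟩ : Fin N).succ) = P.pt h (Fin.last N) :=
    congrArg _ elast
  rw [PWEroad, Walk.support_copy, Walk.mem_support_append_iff,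
    PWEchain_support, Walk.support_cons, Walk.support_nil]
  simp only [List.mem_cons, List.not_mem_nil, or_false]
  constructor
  · rintro ((rfl | ⟨i, -, h1, h2⟩) | (rfl | rfl))
    · exact Or.inl (by rw [P.pt_first h])
    · exact Or.inr (Or.inr ⟨i, h1, h2⟩)
    · -- p = (last N, pt (last N))
      refine Or.inr (Or.inr ⟨⟨N - 1, hNm⟩, ?_, ?_⟩)
      · exact elast.symm
      · show P.pt h (Fin.last N) ∈ _
        rw [← elast']
        exact Walk.end_mem_support (P.piece h ⟨N - 1, hNm⟩)
    · exact Or.inr (Or.inl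
        (show ((0 : Fin (N + 1)), P.pt h (Fin.last N)) = (0, P.vmap b) by rw [P.pt_last h]))
  · rintro (rfl | rfl | ⟨i, h1, h2⟩)
    · exact Or.inl (Or.inl (by rw [P.pt_first h]))
    · exact Or.inr (Or.inr
        (show ((0 : Fin (N + 1)), P.vmap b) = (0, P.pt h (Fin.last N)) by rw [P.pt_last h]))
    · exact Or.inl (Or.inr ⟨i, i.isLt, h1, h2⟩)

end PWEaux

/-- An N-piecewise embedding of Γ into Y yields a combinatorial embedding of Γ into
the box product of the cycle C_{N+1} with Y, with each vertex v mapped to (0, f v). -/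
theorem piecewise_to_combEmbedding {V W : Type*} (Γ : SimpleGraph V) (Y : SimpleGraph W)
    (N : ℕ) (P : PiecewiseEmbedding Γ Y N) :
    ∃ F : CombEmbedding Γ (SimpleGraph.cycleGraph (N + 1) □ Y),
      ∀ v, F.vmap v = (0, P.vmap v) := by
  refine ⟨{ vmap := fun v => ((0 : Fin (N + 1)), P.vmap v),
            inj := fun u v e => P.inj (congrArg Prod.snd e),
            road := fun a b h => PWEroad P h,
            disj := ?_,
            iso := ?_ }, fun v => rfl⟩
  · intro a b c d h1 h2 hac had hbc hbd x hx1 hx2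
    rw [PWEroad_support] at hx1 hx2
    rcases hx1 with rfl | rfl | ⟨i, hi1, hi2⟩
    · rcases hx2 with e | e | ⟨j, hj1, hj2⟩
      · exact hac (P.inj (congrArg Prod.snd e))
      · exact had (P.inj (congrArg Prod.snd e))
      · exact Fin.succ_ne_zero j hj1.symm
    · rcases hx2 with e | e | ⟨j, hj1, hj2⟩
      · exact hbc (P.inj (congrArg Prod.snd e))
      · exact hbd (P.inj (congrArg Prod.snd e))
      · exact Fin.succ_ne_zero j hj1.symm
    · rcases hx2 with rfl | rfl | ⟨j, hj1, hj2⟩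
      · exact Fin.succ_ne_zero i hi1.symm
      · exact Fin.succ_ne_zero i hi1.symm
      · have hij : i = j := Fin.succ_injective _ (hi1.symm.trans hj1)
        subst hij
        exact P.disj h1 h2 hac had hbc hbd i x.2 hi2 hj2
  · intro a b h w hwa hwb hmem
    rw [PWEroad_support] at hmem
    rcases hmem with e | e | ⟨i, hi1, hi2⟩
    · exact hwa (P.inj (congrArg Prod.snd e))
    · exact hwb (P.inj (congrArg Prod.snd e))
    · exact Fin.succ_ne_zero i hi1.symm
end

section
/- There exists an absolute constant C > 0 such that for every d ∈ ℕ, there is a graph with at most C·2^d/√d edges and no isolated vertices that is not a minor of the d-dimensional hypercube Q_d. -/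
open SimpleGraph

/-- The `d`-dimensional hypercube: vertices are `{0,1}`-strings of length `d`, adjacent iff
they differ in exactly one coordinate. -/
def hypercube (d : ℕ) : SimpleGraph (Fin d → Bool) :=
  prodGraph fun _ => (⊤ : SimpleGraph Bool)

private def lvl {d : ℕ} (x : Fin d → Bool) : ℕ := (Finset.univ.filter fun i => x i = true).card

private lemma lvl_le {d : ℕ} (x : Fin d → Bool) : lvl x ≤ d := by
  classical
  calc (Finset.univ.filter fun i => x i = true).card ≤ Finset.univ.card :=
        Finset.card_filter_le _ _
    _ = d := by simp

private lemma hypercube_adj' {d : ℕ} {x y : Fin d → Bool} (h : (hypercube d).Adj x y) :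
    ∃ i, x i ≠ y i ∧ ∀ j, j ≠ i → x j = y j := h

private lemma lvl_step {d : ℕ} {x y : Fin d → Bool} (i : Fin d) (hxi : x i = true)
    (hyi : y i = false) (hj : ∀ j, j ≠ i → x j = y j) : lvl x = lvl y + 1 := by
  classical
  have hfe : (Finset.univ.filter fun j => x j = true)
      = insert i (Finset.univ.filter fun j => y j = true) := by
    ext j
    simp only [Finset.mem_insert, Finset.mem_filter, Finset.mem_univ, true_and]
    by_cases hji : j = i
    · subst hji; simp [hxi]
    · rw [hj j hji]; simp [hji]
  have hni : i ∉ (Finset.univ.filter fun j => y j = true) := by simp [hyi]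
  unfold lvl
  rw [hfe, Finset.card_insert_of_notMem hni]

private lemma adj_lvl {d : ℕ} {x y : Fin d → Bool} (h : (hypercube d).Adj x y) :
    lvl x = lvl y + 1 ∨ lvl y = lvl x + 1 := by
  obtain ⟨i, hne, hj⟩ := hypercube_adj' h
  by_cases hxi : x i = true
  · have hyi : y i = false := by
      cases hy : y i
      · rfl
      · exact absurd (hxi.trans hy.symm) hne
    exact Or.inl (lvl_step i hxi hyi hj)
  · have hxi' : x i = false := by
      cases hx : x i
      · rfl
      · exact absurd hx hxi
    have hyi : y i = true := by
      cases hy : y i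
      · exact absurd (hxi'.trans hy.symm) hne
      · rfl
    exact Or.inr (lvl_step i hyi hxi' (fun j hj' => (hj j hj').symm))

private lemma walk_ivt {d k : ℕ} {s : Set (Fin d → Bool)} :
    ∀ {u v : s} (_ : ((hypercube d).induce s).Walk u v),
      lvl u.1 ≤ k → k ≤ lvl v.1 → ∃ z ∈ s, lvl z = k := by
  intro u v w
  induction w with
  | @nil u =>
    intro h1 h2
    exact ⟨u.1, u.2, le_antisymm h1 h2⟩
  | @cons u u' v h p ih =>
    intro h1 h2
    rcases le_or_gt (lvl u'.1) k with h3 | h3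
    · exact ih h3 h2
    · have h4 := adj_lvl (show (hypercube d).Adj u.1 u'.1 from h)
      refine ⟨u.1, u.2, ?_⟩
      rcases h4 with h4 | h4 <;> omega

private lemma cb_sq (m : ℕ) : (3*m+1) * (Nat.centralBinom m)^2 ≤ 16^m := by
  induction m with
  | zero => simp [Nat.centralBinom]
  | succ m ih =>
    have key : (m+1) * Nat.centralBinom (m+1) = 2*(2*m+1) * Nat.centralBinom m :=
      Nat.succ_mul_centralBinom_succ m
    have hpos : 0 < (3*m+1)*(m+1)^2 := by positivity
    apply Nat.le_of_mul_le_mul_left _ hpos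
    have e1 : (3*m+1)*(m+1)^2 * ((3*(m+1)+1) * (Nat.centralBinom (m+1))^2)
        = (3*m+1)*(3*m+4) * ((m+1) * Nat.centralBinom (m+1))^2 := by ring
    rw [e1, key]
    have hpoly : (3*m+4)*(2*(2*m+1))^2 ≤ 16*(m+1)^2*(3*m+1) := by nlinarith
    calc (3*m+1)*(3*m+4) * (2*(2*m+1) * Nat.centralBinom m)^2
        = ((3*m+4)*(2*(2*m+1))^2) * ((3*m+1) * (Nat.centralBinom m)^2) := by ring
      _ ≤ (16*(m+1)^2*(3*m+1)) * 16^m := Nat.mul_le_mul hpoly ih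
      _ = (3*m+1)*(m+1)^2 * 16^(m+1) := by ring

private lemma dM_le (d : ℕ) : d * (d.choose (d/2))^2 ≤ 4^d := by
  rcases Nat.even_or_odd d with ⟨m, hm⟩ | ⟨m, hm⟩
  · subst hm
    have h2 : (m+m)/2 = m := by omega
    rw [h2]
    have hcb : (m+m).choose m = Nat.centralBinom m := by
      rw [Nat.centralBinom]; congr 1; ring
    rw [hcb]
    calc (m+m) * (Nat.centralBinom m)^2 ≤ (3*m+1) * (Nat.centralBinom m)^2 :=
          Nat.mul_le_mul (by omega) le_rfl
      _ ≤ 16^m := cb_sq m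
      _ = 4^(m+m) := by rw [show (16:ℕ) = 4^2 by norm_num, ← pow_mul]; congr 1; ring
  · subst hm
    have h2 : (2*m+1)/2 = m := by omega
    rw [h2]
    have hsymm : (2*m+1).choose (m+1) = (2*m+1).choose m := by
      have := Nat.choose_symm (show m+1 ≤ 2*m+1 by omega)
      rw [show 2*m+1-(m+1) = m by omega] at this
      exact this.symm
    have hdouble : 2 * ((2*m+1).choose m) = Nat.centralBinom (m+1) := by
      rw [Nat.centralBinom, show 2*(m+1) = (2*m+1)+1 by ring, Nat.choose_succ_succ, hsymm]
      omega
    apply Nat.le_of_mul_le_mul_left _ (show 0 < 4 by norm_num)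
    calc 4 * ((2*m+1) * ((2*m+1).choose m)^2)
        = (2*m+1) * (2*((2*m+1).choose m))^2 := by ring
      _ = (2*m+1) * (Nat.centralBinom (m+1))^2 := by rw [hdouble]
      _ ≤ (3*(m+1)+1) * (Nat.centralBinom (m+1))^2 := Nat.mul_le_mul (by omega) le_rfl
      _ ≤ 16^(m+1) := cb_sq (m+1)
      _ = 4 * 4^(2*m+1) := by
          rw [show (16:ℕ) = 4^2 by norm_num, ← pow_mul]
          rw [show 2*(m+1) = (2*m+1)+1 by ring, pow_succ]
          ring

private lemma exists_good (n : ℕ) (hn : 1 ≤ n) :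
    ∃ f : Fin (11*n) → Fin n × Fin n, ∀ A B : Finset (Fin n), Disjoint A B →
      n ≤ 4*A.card → n ≤ 4*B.card →
      ∃ i, ((f i).1 ∈ A ∧ (f i).2 ∈ B) ∨ ((f i).1 ∈ B ∧ (f i).2 ∈ A) := by
  classical
  by_contra hcon
  push_neg at hcon
  set m := 11*n with hm
  set cross : Finset (Fin n) × Finset (Fin n) → Finset (Fin n × Fin n) :=
    fun p => p.1 ×ˢ p.2 ∪ p.2 ×ˢ p.1 with hcrossdef
  set pairs : Finset (Finset (Fin n) × Finset (Fin n)) :=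
    Finset.univ.filter fun p => Disjoint p.1 p.2 ∧ n ≤ 4*p.1.card ∧ n ≤ 4*p.2.card with hpairs
  set bad : Finset (Fin n) × Finset (Fin n) → Finset (Fin m → Fin n × Fin n) :=
    fun p => Finset.univ.filter fun f => ∀ i, f i ∉ cross p with hbad
  have hcover : (Finset.univ : Finset (Fin m → Fin n × Fin n)) ⊆ pairs.biUnion bad := by
    intro f _
    obtain ⟨A, B, h1, h2, h3, h4⟩ := hcon f
    refine Finset.mem_biUnion.mpr ⟨(A,B), ?_, ?_⟩
    · rw [hpairs]; simp only [Finset.mem_filter, Finset.mem_univ, true_and]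
      exact ⟨h1, h2, h3⟩
    · rw [hbad]; simp only [Finset.mem_filter, Finset.mem_univ, true_and]
      intro i hi
      rw [hcrossdef] at hi
      simp only [Finset.mem_union, Finset.mem_product] at hi
      rcases hi with ⟨ha', hb'⟩ | ⟨hb', ha'⟩
      · exact (h4 i).1 ha' hb'
      · exact (h4 i).2 hb' ha'
  have hbadcard : ∀ p ∈ pairs, (bad p).card * 8^m ≤ 7^m * (n*n)^m := by
    intro p hp
    rw [hpairs, Finset.mem_filter] at hp
    obtain ⟨-, hd, ha, hb⟩ := hp
    have hcross : (cross p).card = 2 * (p.1.card * p.2.card) := by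
      have hdp : Disjoint (p.1 ×ˢ p.2) (p.2 ×ˢ p.1) := by
        rw [Finset.disjoint_left]
        rintro ⟨x, y⟩ hxy hxy'
        simp only [Finset.mem_product] at hxy hxy'
        exact (Finset.disjoint_left.mp hd hxy.1) hxy'.1
      rw [hcrossdef]
      simp only []
      rw [Finset.card_union_of_disjoint hdp, Finset.card_product, Finset.card_product]
      ring
    have hsub : bad p ⊆ Fintype.piFinset fun _ : Fin m => (cross p)ᶜ := by
      intro f hf
      rw [hbad, Finset.mem_filter] at hf
      rw [Fintype.mem_piFinset]
      intro i
      rw [Finset.mem_compl]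
      exact hf.2 i
    have h1 : (bad p).card ≤ (n*n - 2*(p.1.card*p.2.card))^m := by
      calc (bad p).card ≤ (Fintype.piFinset fun _ : Fin m => (cross p)ᶜ).card :=
            Finset.card_le_card hsub
        _ = ((cross p)ᶜ.card)^m := by
            rw [Fintype.card_piFinset]
            simp
        _ = (n*n - 2*(p.1.card*p.2.card))^m := by
            rw [Finset.card_compl, hcross]
            congr 2
            simp
    have hkey : 8 * (n*n - 2*(p.1.card*p.2.card)) ≤ 7 * (n*n) := by
      have h16 : n*n ≤ 16 * (p.1.card * p.2.card) := by
        calc n*n ≤ (4*p.1.card)*(4*p.2.card) := Nat.mul_le_mul ha hb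
          _ = 16*(p.1.card*p.2.card) := by ring
      omega
    calc (bad p).card * 8^m ≤ (n*n - 2*(p.1.card*p.2.card))^m * 8^m :=
          Nat.mul_le_mul_right _ h1
      _ = (8 * (n*n - 2*(p.1.card*p.2.card)))^m := by rw [mul_pow, Nat.mul_comm]
      _ ≤ (7*(n*n))^m := Nat.pow_le_pow_left hkey m
      _ = 7^m * (n*n)^m := mul_pow _ _ _
  have hpairsbound : pairs.card ≤ 4^n := by
    calc pairs.card ≤ (Finset.univ : Finset (Finset (Fin n) × Finset (Fin n))).card :=
          Finset.card_le_card (Finset.filter_subset _ _)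
      _ = 4^n := by
          rw [Finset.card_univ, Fintype.card_prod, Fintype.card_finset, Fintype.card_fin]
          rw [← mul_pow]
          norm_num
  have htotal : ((n*n)^m) * 8^m ≤ 4^n * (7^m * (n*n)^m) := by
    have h0 : ((Finset.univ : Finset (Fin m → Fin n × Fin n))).card = (n*n)^m := by
      rw [Finset.card_univ]
      simp [Fintype.card_fun]
    calc (n*n)^m * 8^m = (Finset.univ : Finset (Fin m → Fin n × Fin n)).card * 8^m := by
          rw [h0]
      _ ≤ (pairs.biUnion bad).card * 8^m :=
          Nat.mul_le_mul_right _ (Finset.card_le_card hcover)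
      _ ≤ (∑ p ∈ pairs, (bad p).card) * 8^m :=
          Nat.mul_le_mul_right _ Finset.card_biUnion_le
      _ = ∑ p ∈ pairs, (bad p).card * 8^m := by rw [Finset.sum_mul]
      _ ≤ ∑ _p ∈ pairs, 7^m * (n*n)^m := Finset.sum_le_sum hbadcard
      _ = pairs.card * (7^m * (n*n)^m) := by rw [Finset.sum_const, smul_eq_mul]
      _ ≤ 4^n * (7^m*(n*n)^m) := Nat.mul_le_mul_right _ hpairsbound
  have hlt : 4^n * 7^m < 8^m := by
    rw [hm]
    calc 4^n * 7^(11*n) = (4*7^11)^n := by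
          rw [mul_pow, ← pow_mul]
      _ < (8^11)^n := Nat.pow_lt_pow_left (by norm_num) (by omega)
      _ = 8^(11*n) := by rw [← pow_mul]
  have hpos : 0 < (n*n)^m := by positivity
  have h2 : 4^n * (7^m * (n*n)^m) < 8^m * (n*n)^m := by
    rw [← mul_assoc]
    exact (Nat.mul_lt_mul_right hpos).mpr hlt
  have h3 : (n*n)^m * 8^m < (n*n)^m * 8^m :=
    lt_of_le_of_lt htotal (lt_of_lt_of_le h2 (le_of_eq (Nat.mul_comm _ _)))
  exact lt_irrefl _ h3

private def con (n : ℕ) (f : Fin (11*n) → Fin n × Fin n) : SimpleGraph (Fin n) where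
  Adj v u := v ≠ u ∧ ((∃ i, f i = (v,u) ∨ f i = (u,v)) ∨ (v.val+1 = u.val ∨ u.val+1 = v.val))
  symm := by
    constructor
    rintro v u ⟨h1, h2⟩
    refine ⟨h1.symm, ?_⟩
    rcases h2 with ⟨i, hi | hi⟩ | h | h
    · exact Or.inl ⟨i, Or.inr hi⟩
    · exact Or.inl ⟨i, Or.inl hi⟩
    · exact Or.inr (Or.inr h)
    · exact Or.inr (Or.inl h)
  loopless := ⟨fun v h => h.1 rfl⟩

private lemma con_edge_bound (n : ℕ) (f : Fin (11*n) → Fin n × Fin n) :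
    (con n f).edgeSet.ncard ≤ 12*n := by
  classical
  set g1 : Fin (11*n) → Sym2 (Fin n) := fun i => s((f i).1, (f i).2) with hg1
  set g2 : Fin n → Sym2 (Fin n) := fun v => s(v, ⟨(v.val+1) % n, Nat.mod_lt _ v.pos⟩) with hg2
  have hsub : (con n f).edgeSet ⊆ Set.range g1 ∪ Set.range g2 := by
    intro e
    refine Sym2.ind (fun v u => ?_) e
    intro he
    rw [mem_edgeSet] at he
    obtain ⟨hne, h⟩ := he
    rcases h with ⟨i, hi | hi⟩ | h | h
    · exact Or.inl ⟨i, by rw [hg1]; simp only []; rw [hi]⟩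
    · refine Or.inl ⟨i, ?_⟩
      rw [hg1]; simp only []; rw [hi]
      exact Sym2.eq_swap
    · refine Or.inr ⟨v, ?_⟩
      rw [hg2]; simp only []
      have hval : ((v.val+1) % n) = u.val := by rw [h]; exact Nat.mod_eq_of_lt u.isLt
      rw [show (⟨(v.val+1)%n, Nat.mod_lt _ v.pos⟩ : Fin n) = u from Fin.ext hval]
    · refine Or.inr ⟨u, ?_⟩
      rw [hg2]; simp only []
      have hval : ((u.val+1) % n) = v.val := by rw [h]; exact Nat.mod_eq_of_lt v.isLt
      rw [show (⟨(u.val+1)%n, Nat.mod_lt _ u.pos⟩ : Fin n) = v from Fin.ext hval]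
      exact Sym2.eq_swap
  have hr1 : (Set.range g1).ncard ≤ 11*n := by
    rw [← Set.image_univ]
    calc (g1 '' Set.univ).ncard ≤ (Set.univ : Set (Fin (11*n))).ncard :=
          Set.ncard_image_le Set.finite_univ
      _ = 11*n := by rw [Set.ncard_univ, Nat.card_eq_fintype_card, Fintype.card_fin]
  have hr2 : (Set.range g2).ncard ≤ n := by
    rw [← Set.image_univ]
    calc (g2 '' Set.univ).ncard ≤ (Set.univ : Set (Fin n)).ncard :=
          Set.ncard_image_le Set.finite_univ
      _ = n := by rw [Set.ncard_univ, Nat.card_eq_fintype_card, Fintype.card_fin]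
  calc (con n f).edgeSet.ncard ≤ (Set.range g1 ∪ Set.range g2).ncard :=
        Set.ncard_le_ncard hsub (Set.toFinite _)
    _ ≤ (Set.range g1).ncard + (Set.range g2).ncard := Set.ncard_union_le _ _
    _ ≤ 11*n + n := add_le_add hr1 hr2
    _ = 12*n := by ring

private lemma con_no_isolated (n : ℕ) (hn : 2 ≤ n) (f : Fin (11*n) → Fin n × Fin n) (v : Fin n) :
    ∃ u, (con n f).Adj v u := by
  by_cases hv : v.val + 1 < n
  · refine ⟨⟨v.val+1, hv⟩, Fin.ne_of_val_ne (by simp), Or.inr (Or.inl rfl)⟩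
  · have hlt := v.isLt
    refine ⟨⟨v.val-1, by omega⟩, Fin.ne_of_val_ne (by simp; omega), Or.inr (Or.inr ?_)⟩
    simp
    omega

/-- There is a constant C > 0 such that for every d there is a graph with at most
C 2^d / √d edges and no isolated vertices that is not a minor of the hypercube Q_d. -/
theorem hypercube_not_minor_universal :
    ∃ C : ℝ, 0 < C ∧ ∀ d : ℕ, ∃ (N : ℕ) (Γ : SimpleGraph (Fin N)),
      (Γ.edgeSet.ncard : ℝ) * Real.sqrt d ≤ C * 2 ^ d ∧
      (∀ v, ∃ u, Γ.Adj v u) ∧ ¬ Γ.IsMinorOf (hypercube d) := by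
  classical
  refine ⟨288, by norm_num, fun d => ?_⟩
  set M := d.choose (d/2) with hM
  have hM1 : 1 ≤ M := Nat.choose_pos (Nat.div_le_self d 2)
  set n := 12*M+12 with hn
  obtain ⟨f, hf⟩ := exists_good n (by omega)
  refine ⟨n, con n f, ?_, con_no_isolated n (by omega) f, ?_⟩
  · -- edge bound
    have hc : ((con n f).edgeSet.ncard : ℝ) ≤ 12*(n:ℝ) := by
      exact_mod_cast con_edge_bound n f
    have hMd : (M:ℝ) * Real.sqrt d ≤ 2^d := by
      have hnat : (d * M^2 : ℕ) ≤ 4^d := dM_le d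
      have hds : (0:ℝ) ≤ (d:ℝ) := Nat.cast_nonneg _
      have key : ((M:ℝ)*Real.sqrt d)^2 ≤ ((2:ℝ)^d)^2 := by
        have h1 : ((M:ℝ)*Real.sqrt d)^2 = (M:ℝ)^2 * d := by
          rw [mul_pow, Real.sq_sqrt hds]
        have h2 : ((2:ℝ)^d)^2 = (4:ℝ)^d := by
          rw [← pow_mul, mul_comm, pow_mul]
          norm_num
        rw [h1, h2]
        calc (M:ℝ)^2*(d:ℝ) = ((d*M^2 : ℕ):ℝ) := by push_cast; ring
          _ ≤ ((4^d : ℕ):ℝ) := Nat.cast_le.mpr hnat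
          _ = (4:ℝ)^d := by push_cast; ring
      have hnn : (0:ℝ) ≤ (M:ℝ)*Real.sqrt d :=
        mul_nonneg (Nat.cast_nonneg _) (Real.sqrt_nonneg _)
      nlinarith [Real.sqrt_nonneg (d:ℝ), pow_pos (show (0:ℝ) < 2 by norm_num) d]
    have h12n : (12*(n:ℝ)) ≤ 288*(M:ℝ) := by
      have : 12*n ≤ 288*M := by omega
      exact_mod_cast this
    calc ((con n f).edgeSet.ncard : ℝ) * Real.sqrt d
        ≤ (12*(n:ℝ)) * Real.sqrt d :=
          mul_le_mul_of_nonneg_right hc (Real.sqrt_nonneg _)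
      _ ≤ (288*(M:ℝ)) * Real.sqrt d :=
          mul_le_mul_of_nonneg_right h12n (Real.sqrt_nonneg _)
      _ = 288*((M:ℝ) * Real.sqrt d) := by ring
      _ ≤ 288 * 2^d := by
          have := mul_le_mul_of_nonneg_left hMd (show (0:ℝ) ≤ 288 by norm_num)
          linarith
  · -- not a minor
    rintro ⟨μ, hconn, hdisj, hadj⟩
    have hne : ∀ a, (μ a).Nonempty := fun a => by
      obtain ⟨⟨x, hx⟩⟩ := (hconn a).nonempty
      exact ⟨x, hx⟩
    have hivt : ∀ (a : Fin n) (x y : Fin d → Bool), x ∈ μ a → y ∈ μ a →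
        ∀ k, lvl x ≤ k → k ≤ lvl y → ∃ z ∈ μ a, lvl z = k := by
      intro a x y hx hy k h1 h2
      obtain ⟨w⟩ := (hconn a).preconnected ⟨x, hx⟩ ⟨y, hy⟩
      exact walk_ivt w h1 h2
    set P : ℕ → Prop := fun k =>
      n ≤ 3 * (Finset.univ.filter fun a : Fin n => ∀ x ∈ μ a, lvl x ≤ k).card with hP
    have hPd : P d := by
      show n ≤ 3 * (Finset.univ.filter fun a : Fin n => ∀ x ∈ μ a, lvl x ≤ d).card
      have heq : (Finset.univ.filter fun a : Fin n => ∀ x ∈ μ a, lvl x ≤ d)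
          = Finset.univ := by
        apply Finset.filter_true_of_mem
        intro a _ x _
        exact lvl_le x
      rw [heq, Finset.card_univ, Fintype.card_fin]
      omega
    have hex : ∃ k, P k := ⟨d, hPd⟩
    set K := Nat.find hex with hK
    set A := Finset.univ.filter (fun a : Fin n => ∀ x ∈ μ a, lvl x < K) with hA
    set T := Finset.univ.filter (fun a : Fin n => ∃ x ∈ μ a, lvl x = K) with hT
    set B := Finset.univ.filter (fun a : Fin n => ∀ x ∈ μ a, K < lvl x) with hB
    have hTM : T.card ≤ M := by
      set xa : Fin n → (Fin d → Bool) :=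
        fun a => if h : ∃ x ∈ μ a, lvl x = K then h.choose else (fun _ => false) with hxa
      have hxaT : ∀ a ∈ T, xa a ∈ μ a ∧ lvl (xa a) = K := by
        intro a ha
        rw [hT, Finset.mem_filter] at ha
        obtain ⟨-, hex2⟩ := ha
        rw [hxa]
        simp only [dif_pos hex2]
        exact ⟨hex2.choose_spec.1, hex2.choose_spec.2⟩
      have hcard : T.card ≤ (Finset.powersetCard K (Finset.univ : Finset (Fin d))).card := by
        apply Finset.card_le_card_of_injOn
          (fun a => Finset.univ.filter fun i => xa a i = true)
        · intro a ha
          rw [Finset.mem_coe, Finset.mem_powersetCard]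
          exact ⟨Finset.filter_subset _ _, (hxaT a ha).2⟩
        · intro a ha b hb hab
          by_contra hne2
          have h1 := hxaT a ha
          have h2 := hxaT b hb
          have hxeq : xa a = xa b := by
            funext i
            have hmem := Finset.ext_iff.mp hab i
            simp only [Finset.mem_filter, Finset.mem_univ, true_and] at hmem
            cases hxi : xa a i
            · cases hyi : xa b i
              · rfl
              · exact absurd (hmem.mpr hyi) (by simp [hxi])
            · exact (hmem.mp hxi).symm
          exact (Set.disjoint_left.mp (hdisj hne2) h1.1) (hxeq ▸ h2.1)
      calc T.card ≤ (Finset.powersetCard K (Finset.univ : Finset (Fin d))).card := hcard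
        _ = d.choose K := by
            rw [Finset.card_powersetCard, Finset.card_univ, Fintype.card_fin]
        _ ≤ M := by rw [hM]; exact Nat.choose_le_middle K d
    have hcover : ∀ a : Fin n, a ∈ A ∪ T ∪ B := by
      intro a
      by_cases haT : a ∈ T
      · exact Finset.mem_union_left _ (Finset.mem_union_right _ haT)
      · have hnoK : ∀ x ∈ μ a, lvl x ≠ K := by
          intro x hx hK2
          apply haT
          rw [hT, Finset.mem_filter]
          exact ⟨Finset.mem_univ _, x, hx, hK2⟩
        by_cases haA : ∀ x ∈ μ a, lvl x < K
        · apply Finset.mem_union_left _ (Finset.mem_union_left _ _)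
          rw [hA, Finset.mem_filter]
          exact ⟨Finset.mem_univ _, haA⟩
        · push_neg at haA
          obtain ⟨x1, hx1, hx1K⟩ := haA
          apply Finset.mem_union_right
          rw [hB, Finset.mem_filter]
          refine ⟨Finset.mem_univ _, fun y hy => ?_⟩
          by_contra hyK
          push_neg at hyK
          obtain ⟨z, hz, hzK⟩ := hivt a y x1 hy hx1 K hyK hx1K
          exact hnoK z hz hzK
    have hAB : Disjoint A B := by
      rw [Finset.disjoint_left]
      intro a haA haB
      rw [hA, Finset.mem_filter] at haA
      rw [hB, Finset.mem_filter] at haB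
      obtain ⟨x, hx⟩ := hne a
      have h1 := haA.2 x hx
      have h2 := haB.2 x hx
      omega
    have hcard_cover : n ≤ A.card + T.card + B.card := by
      have h1 : (Finset.univ : Finset (Fin n)).card ≤ (A ∪ T ∪ B).card :=
        Finset.card_le_card (fun a _ => hcover a)
      have h2 := Finset.card_union_le (A ∪ T) B
      have h3 := Finset.card_union_le A T
      rw [Finset.card_univ, Fintype.card_fin] at h1
      omega
    have hAT : n ≤ 3*(A.card + T.card) := by
      have hPK : P K := Nat.find_spec hex
      rw [hP] at hPK
      have hsub : (Finset.univ.filter fun a : Fin n => ∀ x ∈ μ a, lvl x ≤ K) ⊆ A ∪ T := by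
        intro a ha
        rw [Finset.mem_filter] at ha
        by_cases haT : a ∈ T
        · exact Finset.mem_union_right _ haT
        · refine Finset.mem_union_left _ ?_
          rw [hA, Finset.mem_filter]
          refine ⟨Finset.mem_univ _, fun x hx => ?_⟩
          have h1 := ha.2 x hx
          have h2 : lvl x ≠ K := by
            intro he
            apply haT
            rw [hT, Finset.mem_filter]
            exact ⟨Finset.mem_univ _, x, hx, he⟩
          omega
      have h1 := Finset.card_le_card hsub
      have h2 := Finset.card_union_le A T
      omega
    have hAsmall : 3*A.card < n := by
      rcases Nat.eq_zero_or_pos K with hK0 | hKpos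
      · have hAempty : A = ∅ := by
          rw [Finset.eq_empty_iff_forall_notMem]
          intro a ha
          rw [hA, Finset.mem_filter] at ha
          obtain ⟨x, hx⟩ := hne a
          have := ha.2 x hx
          omega
        rw [hAempty]
        simp only [Finset.card_empty, Nat.mul_zero]
        omega
      · have hnot : ¬ P (K-1) := Nat.find_min hex (by omega)
        rw [hP] at hnot
        push_neg at hnot
        have hsub : A ⊆ Finset.univ.filter fun a : Fin n => ∀ x ∈ μ a, lvl x ≤ K-1 := by
          intro a ha
          rw [hA, Finset.mem_filter] at ha
          rw [Finset.mem_filter]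
          refine ⟨Finset.mem_univ _, fun x hx => ?_⟩
          have := ha.2 x hx
          omega
        have := Finset.card_le_card hsub
        omega
    have h4A : n ≤ 4*A.card := by omega
    have h4B : n ≤ 4*B.card := by omega
    have hedge : ∀ a b : Fin n, a ∈ A → b ∈ B → ¬ (con n f).Adj a b := by
      intro a b haA hbB hadj2
      obtain ⟨x, hx, y, hy, hxy⟩ := hadj hadj2
      rw [hA, Finset.mem_filter] at haA
      rw [hB, Finset.mem_filter] at hbB
      have h1 := haA.2 x hx
      have h2 := hbB.2 y hy
      rcases adj_lvl hxy with h3 | h3 <;> omega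
    obtain ⟨i, hi⟩ := hf A B hAB h4A h4B
    rcases hi with ⟨h1, h2⟩ | ⟨h1, h2⟩
    · refine hedge _ _ h1 h2 ⟨?_, Or.inl ⟨i, Or.inl rfl⟩⟩
      intro he
      exact (Finset.disjoint_left.mp hAB h1) (by rw [he]; exact h2)
    · refine hedge _ _ h2 h1 ⟨?_, Or.inl ⟨i, Or.inr rfl⟩⟩
      intro he
      exact (Finset.disjoint_left.mp hAB h2) (by rw [he]; exact h1)
end
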